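/- arXiv:1810.02750 — 7 statements merged into one kernel-verified Lean document; each statement's English description precedes it below -/
import Mathlib

section
/- For all real numbers 0 < Λ̄ < Λ and K < ∞ there exist an integer M ≥ 1, vectors π^{(1)},…,π^{(M)} ∈ Π_{≤1}, and kernels κ^{(1)},…,κ^{(M)} (symmetric k×k matrices with nonnegative entries) such that: ρ(κ^{(m)}∘π^{(m)}) = Λ̄ for each m ∈ [M]; and for every π ∈ Π_{≤1} and every kernel κ with all entries in [0,K] satisfying ρ(κ∘π) ≥ Λ, there exists m ∈ [M] with π^{(m)}_i ≤ π_i for all i ∈ [k] and κ^{(m)}_{i,j} ≤ κ_{i,j} for all i,j ∈ [k]. -/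
open Matrix

noncomputable def perronRoot {k : ℕ} (A : Matrix (Fin k) (Fin k) ℝ) : ℝ :=
  sSup ((fun z : ℂ => ‖z‖) '' spectrum ℂ (A.map Complex.ofReal))

def circ {k : ℕ} (A : Matrix (Fin k) (Fin k) ℝ) (v : Fin k → ℝ) : Matrix (Fin k) (Fin k) ℝ :=
  Matrix.of fun i j => A i j * v j

/-- `π ∈ Π_{≤1}`: a subdistribution on `[k]`. -/
def IsSubdist {k : ℕ} (π : Fin k → ℝ) : Prop :=
  (∀ i, 0 ≤ π i) ∧ ∑ i, π i ≤ 1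

def IsKernel {k : ℕ} (κ : Matrix (Fin k) (Fin k) ℝ) : Prop :=
  κ.IsSymm ∧ ∀ i j, 0 ≤ κ i j

namespace PerronAux

variable {k : ℕ}

/-- complexification -/
noncomputable def cx (A : Matrix (Fin k) (Fin k) ℝ) : Matrix (Fin k) (Fin k) ℂ :=
  A.map Complex.ofReal

section Linfty

attribute [local instance] Matrix.linftyOpNormedAddCommGroup Matrix.linftyOpNormedRing
  Matrix.linftyOpNormedAlgebra

lemma exists_max (hk : 0 < k) (A : Matrix (Fin k) (Fin k) ℝ) :
    ∃ z ∈ spectrum ℂ (cx A), (∀ w ∈ spectrum ℂ (cx A), ‖w‖ ≤ ‖z‖) ∧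
      perronRoot A = ‖z‖ ∧
      spectralRadius ℂ (cx A) = (‖z‖₊ : ENNReal) := by
  haveI : NeZero k := ⟨hk.ne'⟩
  have hne : (spectrum ℂ (cx A)).Nonempty := spectrum.nonempty (cx A)
  have hcpt : IsCompact (spectrum ℂ (cx A)) := spectrum.isCompact (cx A)
  obtain ⟨z, hz, hmax⟩ := hcpt.exists_isMaxOn hne (continuous_norm.continuousOn)
  refine ⟨z, hz, hmax, ?_, ?_⟩
  · refine le_antisymm (csSup_le (hne.image _) ?_) (le_csSup ?_ ⟨z, hz, rfl⟩)
    · rintro _ ⟨w, hw, rfl⟩; exact hmax hw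
    · exact (hcpt.image continuous_norm).bddAbove
  · rw [spectralRadius]
    refine le_antisymm (iSup₂_le fun w hw => ?_) ?_
    · have := hmax hw
      exact_mod_cast ENNReal.coe_le_coe.mpr (by
        simpa [← NNReal.coe_le_coe, coe_nnnorm] using hmax hw)
    · exact le_iSup₂ (f := fun w (_ : w ∈ spectrum ℂ (cx A)) => (‖w‖₊ : ENNReal)) z hz

lemma perronRoot_nonneg (hk : 0 < k) (A : Matrix (Fin k) (Fin k) ℝ) : 0 ≤ perronRoot A := by
  obtain ⟨z, _, _, hp, _⟩ := exists_max hk A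
  rw [hp]; positivity

lemma perronRoot_eq_toReal (hk : 0 < k) (A : Matrix (Fin k) (Fin k) ℝ) :
    perronRoot A = (spectralRadius ℂ (cx A)).toReal := by
  obtain ⟨z, _, _, hp, hs⟩ := exists_max hk A
  rw [hp, hs, ENNReal.coe_toReal, coe_nnnorm]

lemma cx_pow (A : Matrix (Fin k) (Fin k) ℝ) (n : ℕ) : cx (A ^ n) = (cx A) ^ n := by
  have : cx (A ^ n) = Complex.ofRealHom.mapMatrix (A ^ n) := rfl
  rw [this, map_pow]; rfl

lemma entry_pow_le {A B : Matrix (Fin k) (Fin k) ℝ} (hA : ∀ i j, 0 ≤ A i j)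
    (hAB : ∀ i j, A i j ≤ B i j) (n : ℕ) :
    ∀ i j, 0 ≤ (A ^ n) i j ∧ (A ^ n) i j ≤ (B ^ n) i j := by
  induction n with
  | zero =>
      intro i j
      simp only [pow_zero, Matrix.one_apply]
      split_ifs <;> norm_num
  | succ n ih =>
      intro i j
      rw [pow_succ, pow_succ, Matrix.mul_apply, Matrix.mul_apply]
      constructor
      · exact Finset.sum_nonneg fun l _ => mul_nonneg (ih i l).1 (hA l j)
      · exact Finset.sum_le_sum fun l _ =>
          mul_le_mul (ih i l).2 (hAB l j) (hA l j) (le_trans (ih i l).1 (ih i l).2)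

lemma nnnorm_cx_le {A B : Matrix (Fin k) (Fin k) ℝ} (hA : ∀ i j, 0 ≤ A i j)
    (hAB : ∀ i j, A i j ≤ B i j) : ‖cx A‖₊ ≤ ‖cx B‖₊ := by
  rw [Matrix.linfty_opNNNorm_def, Matrix.linfty_opNNNorm_def]
  refine Finset.sup_mono_fun fun i _ => ?_
  refine Finset.sum_le_sum fun j _ => ?_
  have : ∀ (M : Matrix (Fin k) (Fin k) ℝ), ‖cx M i j‖₊ = ‖M i j‖₊ := fun M => by
    simp [cx, Matrix.map_apply]
  rw [this, this, ← NNReal.coe_le_coe, coe_nnnorm, coe_nnnorm]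
  rw [Real.norm_eq_abs, Real.norm_eq_abs, abs_of_nonneg (hA i j),
    abs_of_nonneg ((hA i j).trans (hAB i j))]
  exact hAB i j

lemma perronRoot_mono (hk : 0 < k) {A B : Matrix (Fin k) (Fin k) ℝ} (hA : ∀ i j, 0 ≤ A i j)
    (hAB : ∀ i j, A i j ≤ B i j) : perronRoot A ≤ perronRoot B := by
  haveI : NeZero k := ⟨hk.ne'⟩
  rw [perronRoot_eq_toReal hk, perronRoot_eq_toReal hk]
  have hfin : spectralRadius ℂ (cx B) ≠ ⊤ :=
    ((spectrum.spectralRadius_le_nnnorm (𝕜 := ℂ) (cx B)).trans_lt ENNReal.coe_lt_top).ne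
  refine ENNReal.toReal_mono hfin ?_
  have key : ∀ n : ℕ, (‖(cx A) ^ n‖₊ : ENNReal) ^ (1 / (n : ℝ)) ≤
      (‖(cx B) ^ n‖₊ : ENNReal) ^ (1 / (n : ℝ)) := by
    intro n
    refine ENNReal.rpow_le_rpow ?_ (by positivity)
    rw [← cx_pow, ← cx_pow]
    exact_mod_cast ENNReal.coe_le_coe.mpr
      (nnnorm_cx_le (fun i j => (entry_pow_le hA hAB n i j).1)
        (fun i j => (entry_pow_le hA hAB n i j).2))
  calc spectralRadius ℂ (cx A)
      ≤ Filter.liminf (fun n : ℕ => (‖(cx A) ^ n‖₊ : ENNReal) ^ (1 / (n : ℝ))) Filter.atTop :=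
        spectrum.spectralRadius_le_liminf_pow_nnnorm_pow_one_div ℂ (cx A)
    _ ≤ Filter.liminf (fun n : ℕ => (‖(cx B) ^ n‖₊ : ENNReal) ^ (1 / (n : ℝ))) Filter.atTop :=
        Filter.liminf_le_liminf (Filter.Eventually.of_forall key)
    _ = spectralRadius ℂ (cx B) :=
        (spectrum.pow_nnnorm_pow_one_div_tendsto_nhds_spectralRadius (cx B)).liminf_eq

lemma perronRoot_le_const (hk : 0 < k) {A : Matrix (Fin k) (Fin k) ℝ} {c : ℝ}
    (hc : 0 ≤ c) (hA : ∀ i j, |A i j| ≤ c) : perronRoot A ≤ k * c := by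
  haveI : NeZero k := ⟨hk.ne'⟩
  rw [perronRoot_eq_toReal hk]
  have h1 : spectralRadius ℂ (cx A) ≤ ‖cx A‖₊ :=
    spectrum.spectralRadius_le_nnnorm (𝕜 := ℂ) (cx A)
  have h2 : (spectralRadius ℂ (cx A)).toReal ≤ ‖cx A‖ := by
    refine (ENNReal.toReal_mono ENNReal.coe_ne_top h1).trans_eq ?_
    simp
  refine h2.trans ?_
  rw [Matrix.linfty_opNorm_def]
  have : ((Finset.univ : Finset (Fin k)).sup fun i => ∑ j, ‖cx A i j‖₊) ≤
      ⟨k * c, by positivity⟩ := by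
    refine Finset.sup_le fun i _ => ?_
    refine NNReal.coe_le_coe.mp ?_
    push_cast
    calc ∑ j, (‖cx A i j‖₊ : ℝ) = ∑ j, |A i j| := by
          refine Finset.sum_congr rfl fun j _ => ?_
          simp [cx, Matrix.map_apply, coe_nnnorm, Complex.norm_real]
      _ ≤ ∑ _j : Fin k, c := Finset.sum_le_sum fun j _ => hA i j
      _ = k * c := by simp [mul_comm]
  exact_mod_cast this

end Linfty

/-- equal spectra up to zero give equal Perron roots -/
lemma perronRoot_eq_of_spectra (hk : 0 < k) {A B : Matrix (Fin k) (Fin k) ℝ}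
    (h : spectrum ℂ (cx A) \ {0} = spectrum ℂ (cx B) \ {0}) :
    perronRoot A = perronRoot B := by
  obtain ⟨z, hz, hmax, hp, _⟩ := exists_max hk A
  obtain ⟨w, hw, hmax', hp', _⟩ := exists_max hk B
  have h1 : perronRoot A ≤ perronRoot B := by
    rw [hp, hp']
    by_cases hz0 : z = 0
    · simp only [hz0, norm_zero]; positivity
    · have : z ∈ spectrum ℂ (cx B) := by
        have : z ∈ spectrum ℂ (cx B) \ {0} := h ▸ ⟨hz, hz0⟩
        exact this.1
      exact hmax' z this
  have h2 : perronRoot B ≤ perronRoot A := by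
    rw [hp, hp']
    by_cases hw0 : w = 0
    · simp only [hw0, norm_zero]; positivity
    · have : w ∈ spectrum ℂ (cx A) := by
        have : w ∈ spectrum ℂ (cx A) \ {0} := h.symm ▸ ⟨hw, hw0⟩
        exact this.1
      exact hmax w this
  linarith

/-- scaling -/
lemma perronRoot_smul (hk : 0 < k) {c : ℝ} (hc : 0 < c) (A : Matrix (Fin k) (Fin k) ℝ) :
    perronRoot (c • A) = c * perronRoot A := by
  haveI : NeZero k := ⟨hk.ne'⟩
  obtain ⟨z, hz, hmax, hp, _⟩ := exists_max hk A
  have hcx : cx (c • A) = (c : ℂ) • cx A := by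
    ext i j
    simp [cx, Matrix.map_apply, Matrix.smul_apply]
  have hspec := spectrum.smul_eq_smul (c : ℂ) (cx A) ⟨z, hz⟩
  rw [show perronRoot (c • A) = sSup ((fun z : ℂ => ‖z‖) '' spectrum ℂ (cx (c • A))) from rfl, hcx,
    hspec, hp]
  refine le_antisymm (csSup_le ?_ ?_) (le_csSup ?_ ?_)
  · exact ⟨‖(c : ℂ) * z‖, ⟨_, Set.smul_mem_smul_set hz, by rw [smul_eq_mul]⟩⟩
  · rintro _ ⟨_, ⟨w, hw, rfl⟩, rfl⟩
    simp only [smul_eq_mul, norm_mul, Complex.norm_real, Real.norm_eq_abs, abs_of_pos hc]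
    exact mul_le_mul_of_nonneg_left (hmax w hw) hc.le
  · refine ⟨c * ‖z‖, ?_⟩
    rintro _ ⟨_, ⟨w, hw, rfl⟩, rfl⟩
    simp only [smul_eq_mul, norm_mul, Complex.norm_real, Real.norm_eq_abs, abs_of_pos hc]
    exact mul_le_mul_of_nonneg_left (hmax w hw) hc.le
  · refine ⟨(c : ℂ) * z, Set.smul_mem_smul_set hz, ?_⟩
    simp only [smul_eq_mul, norm_mul, Complex.norm_real, Real.norm_eq_abs, abs_of_pos hc]

/-- symmetrised matrix -/
noncomputable def symmMat (κ : Matrix (Fin k) (Fin k) ℝ) (π : Fin k → ℝ) :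
    Matrix (Fin k) (Fin k) ℝ :=
  Matrix.of fun i j => Real.sqrt (π i) * κ i j * Real.sqrt (π j)

lemma perronRoot_circ_eq_symm (hk : 0 < k) (κ : Matrix (Fin k) (Fin k) ℝ) {π : Fin k → ℝ}
    (hπ : ∀ i, 0 ≤ π i) : perronRoot (circ κ π) = perronRoot (symmMat κ π) := by
  set D : Matrix (Fin k) (Fin k) ℂ := Matrix.diagonal fun i => (Real.sqrt (π i) : ℂ) with hD
  have h1 : cx (circ κ π) = (cx κ * D) * D := by
    ext i j
    simp only [cx, Matrix.map_apply, circ, Matrix.of_apply, Matrix.mul_diagonal, hD]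
    have hss : (Real.sqrt (π j) : ℂ) * (Real.sqrt (π j) : ℂ) = ((π j : ℝ) : ℂ) := by
      rw [← Complex.ofReal_mul, Real.mul_self_sqrt (hπ j)]
    rw [mul_assoc, hss, Complex.ofReal_mul]
  have h2 : cx (symmMat κ π) = D * (cx κ * D) := by
    ext i j
    simp only [cx, Matrix.map_apply, symmMat, Matrix.of_apply, Matrix.mul_diagonal,
      Matrix.diagonal_mul, hD]
    push_cast
    ring
  apply perronRoot_eq_of_spectra hk
  rw [h1, h2]
  exact spectrum.nonzero_mul_comm _ _

section L2
open scoped Matrix.Norms.L2Operator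

noncomputable local instance : CStarAlgebra (Matrix (Fin k) (Fin k) ℂ) := Matrix.instCStarAlgebra

lemma isSelfAdjoint_cx {S : Matrix (Fin k) (Fin k) ℝ} (hS : S.IsSymm) :
    _root_.IsSelfAdjoint (cx S) := by
  show star (cx S) = cx S
  rw [Matrix.star_eq_conjTranspose]
  ext i j
  simp only [Matrix.conjTranspose_apply, cx, Matrix.map_apply]
  rw [← hS.apply j i]
  simp

/-- triangle inequality for symmetric matrices -/
lemma perronRoot_add_le (hk : 0 < k) {S T : Matrix (Fin k) (Fin k) ℝ}
    (hS : S.IsSymm) (hT : T.IsSymm) :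
    perronRoot (S + T) ≤ perronRoot S + perronRoot T := by
  haveI : NeZero k := ⟨hk.ne'⟩
  have hST : (S + T).IsSymm := hS.add hT
  have hcx : cx (S + T) = cx S + cx T := by
    ext i j; simp [cx, Matrix.map_apply]
  have e1 := (isSelfAdjoint_cx hS).spectralRadius_eq_nnnorm
  have e2 := (isSelfAdjoint_cx hT).spectralRadius_eq_nnnorm
  have e3 := (isSelfAdjoint_cx hST).spectralRadius_eq_nnnorm
  have E : ∀ (M : Matrix (Fin k) (Fin k) ℝ), perronRoot M =
      (spectralRadius ℂ (cx M)).toReal := by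
    intro M
    obtain ⟨z, _, _, hp, hs⟩ := exists_max hk M
    rw [hp, hs, ENNReal.coe_toReal, coe_nnnorm]
  rw [E (S + T), E S, E T, e1, e2, e3, hcx]
  rw [ENNReal.coe_toReal, ENNReal.coe_toReal, ENNReal.coe_toReal]
  push_cast
  exact norm_add_le _ _

end L2

lemma perronRoot_diagonal (hk : 0 < k) {lam : ℝ} (hl : 0 ≤ lam) :
    perronRoot (Matrix.diagonal (fun i => if i = (⟨0, hk⟩ : Fin k) then lam else 0)) = lam := by
  set d : Fin k → ℝ := fun i => if i = (⟨0, hk⟩ : Fin k) then lam else 0 with hd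
  have hcx : cx (Matrix.diagonal d) = Matrix.diagonal (fun i => (d i : ℂ)) := by
    rw [cx, Matrix.diagonal_map (by simp)]
  show sSup ((fun z : ℂ => ‖z‖) '' spectrum ℂ (cx (Matrix.diagonal d))) = lam
  rw [hcx, spectrum_diagonal]
  refine le_antisymm (csSup_le ?_ ?_) (le_csSup ?_ ?_)
  · exact ⟨‖((d ⟨0, hk⟩ : ℝ) : ℂ)‖, ⟨_, ⟨⟨0, hk⟩, rfl⟩, rfl⟩⟩
  · rintro _ ⟨_, ⟨i, rfl⟩, rfl⟩
    simp only [Complex.norm_real, Real.norm_eq_abs]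
    by_cases h : i = (⟨0, hk⟩ : Fin k) <;> simp [hd, h, abs_of_nonneg hl, hl]
  · refine ⟨lam, ?_⟩
    rintro _ ⟨_, ⟨i, rfl⟩, rfl⟩
    simp only [Complex.norm_real, Real.norm_eq_abs]
    by_cases h : i = (⟨0, hk⟩ : Fin k) <;> simp [hd, h, abs_of_nonneg hl, hl]
  · refine ⟨((d ⟨0, hk⟩ : ℝ) : ℂ), ⟨⟨0, hk⟩, rfl⟩, ?_⟩
    simp [hd, Complex.norm_real, abs_of_nonneg hl]

lemma sqrt_sub_sqrt_le {x y : ℝ} (hy : 0 ≤ y) (hxy : y ≤ x) :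
    Real.sqrt x - Real.sqrt y ≤ Real.sqrt (x - y) := by
  have h1 : Real.sqrt x ≤ Real.sqrt y + Real.sqrt (x - y) := by
    rw [← Real.sqrt_sq (by positivity : (0:ℝ) ≤ Real.sqrt y + Real.sqrt (x - y))]
    refine Real.sqrt_le_sqrt ?_
    have e1 : Real.sqrt y ^ 2 = y := Real.sq_sqrt hy
    have e2 : Real.sqrt (x - y) ^ 2 = x - y := Real.sq_sqrt (by linarith)
    nlinarith [Real.sqrt_nonneg y, Real.sqrt_nonneg (x - y)]
  linarith

end PerronAux

open PerronAux

set_option maxHeartbeats 1000000 in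
/-- Lemma 5.2 (minorisation): any kernel-subdistribution pair with Perron root at least Λ
dominates one of finitely many pairs with Perron root exactly Λ̄. -/
theorem minorisation
    {k : ℕ} (hk : 0 < k) (Λbar Λ K : ℝ) (h0 : 0 < Λbar) (hΛ : Λbar < Λ) :
    ∃ (M : ℕ) (πs : Fin M → Fin k → ℝ) (κs : Fin M → Matrix (Fin k) (Fin k) ℝ),
      1 ≤ M ∧
      (∀ m, IsSubdist (πs m)) ∧ (∀ m, IsKernel (κs m)) ∧
      (∀ m, perronRoot (circ (κs m) (πs m)) = Λbar) ∧
      (∀ (π : Fin k → ℝ) (κ : Matrix (Fin k) (Fin k) ℝ),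
        IsSubdist π → IsKernel κ → (∀ i j, κ i j ≤ K) →
        Λ ≤ perronRoot (circ κ π) →
        ∃ m, (∀ i, πs m i ≤ π i) ∧ (∀ i j, κs m i j ≤ κ i j)) := by
  classical
  haveI : NeZero k := ⟨hk.ne'⟩
  set ε := Λ - Λbar with hε
  have hε0 : 0 < ε := by simp only [hε]; linarith
  set K' := max K 1 with hK'
  have hK'1 : (1:ℝ) ≤ K' := le_max_right _ _
  have hK'0 : (0:ℝ) < K' := by linarith
  have hk1 : (1:ℝ) ≤ (k:ℝ) := by exact_mod_cast hk
  set s := min 1 (ε / (3 * k * K')) with hs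
  have hs0 : 0 < s := lt_min one_pos (by positivity)
  have hs1 : s ≤ 1 := min_le_left _ _
  set δ := s ^ 2 with hδ
  have hδ0 : 0 < δ := by positivity
  have hsqδ : Real.sqrt δ = s := by rw [hδ, Real.sqrt_sq hs0.le]
  set c := δ + 2 * K' * s with hc
  have hc0 : 0 ≤ c := by positivity
  have hcε : (k : ℝ) * c ≤ ε := by
    have h2 : s ≤ ε / (3 * k * K') := min_le_right _ _
    have hδs : δ ≤ s := by nlinarith
    have h3 : c ≤ 3 * K' * s := by simp only [hc]; nlinarith
    have h4 : (k:ℝ) * (3 * K' * s) ≤ ε := by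
      have : (3 * (k:ℝ) * K') * s ≤ (3 * (k:ℝ) * K') * (ε / (3 * k * K')) := by
        apply mul_le_mul_of_nonneg_left h2 (by positivity)
      rw [mul_div_cancel₀] at this
      · linarith
      · positivity
    calc (k:ℝ) * c ≤ k * (3 * K' * s) := by
          apply mul_le_mul_of_nonneg_left h3 (by positivity)
      _ ≤ ε := h4
  set N := Nat.ceil ((1:ℝ) / δ) with hN
  set N' := Nat.ceil (K' / δ) with hN'
  set I := (Fin k → Fin (N+1)) × (Fin k → Fin k → Fin (N'+1)) with hI
  set πt : (Fin k → Fin (N+1)) → Fin k → ℝ := fun a i => ((a i : ℕ) : ℝ) * δ with hπt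
  set κt : (Fin k → Fin k → Fin (N'+1)) → Matrix (Fin k) (Fin k) ℝ :=
    fun b => Matrix.of fun i j => ((b i j : ℕ) : ℝ) * δ with hκt
  set Valid : I → Prop := fun p => IsSubdist (πt p.1) ∧ (κt p.2).IsSymm ∧
      Λbar ≤ perronRoot (circ (κt p.2) (πt p.1)) with hValid
  set π0 : Fin k → ℝ := fun i => if i = (⟨0, hk⟩ : Fin k) then 1 else 0 with hπ0
  set κ0 : Matrix (Fin k) (Fin k) ℝ :=
    Matrix.of fun i j => if i = (⟨0, hk⟩ : Fin k) ∧ j = (⟨0, hk⟩ : Fin k) then Λbar else 0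
    with hκ0
  set F : I → (Fin k → ℝ) × Matrix (Fin k) (Fin k) ℝ := fun p =>
    if _h : Valid p then (πt p.1, (Λbar / perronRoot (circ (κt p.2) (πt p.1))) • κt p.2)
    else (π0, κ0) with hF
  have hκt_nonneg : ∀ b i j, 0 ≤ κt b i j := by
    intro b i j
    simp only [hκt, Matrix.of_apply]
    positivity
  -- default pair facts
  have hcirc0 : circ κ0 π0 =
      Matrix.diagonal (fun i => if i = (⟨0, hk⟩ : Fin k) then Λbar else 0) := by
    ext i j
    simp only [circ, Matrix.of_apply, hκ0, hπ0, Matrix.diagonal_apply]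
    rcases eq_or_ne i (⟨0, hk⟩ : Fin k) with h1 | h1 <;>
      rcases eq_or_ne j (⟨0, hk⟩ : Fin k) with h2 | h2
    · subst h1; subst h2; simp
    · subst h1; simp at h2; simp [Matrix.diagonal_apply, h2, Ne.symm h2]
    · subst h2; simp at h1; simp [Matrix.diagonal_apply, h1]
    · simp at h1 h2; simp [Matrix.diagonal_apply, h1, h2]
  have hdef_sub : IsSubdist π0 := by
    constructor
    · intro i; simp only [hπ0]; split_ifs <;> norm_num
    · simp only [hπ0]; rw [Finset.sum_ite_eq']; simp
  have hdef_ker : IsKernel κ0 := by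
    constructor
    · ext i j
      simp only [Matrix.transpose_apply, hκ0, Matrix.of_apply]
      by_cases h1 : i = (⟨0, hk⟩ : Fin k) <;> by_cases h2 : j = (⟨0, hk⟩ : Fin k) <;>
        simp only [h1, h2] <;> simp
    · intro i j
      simp only [hκ0, Matrix.of_apply]
      split_ifs
      exacts [h0.le, le_rfl]
  have hdef_root : perronRoot (circ κ0 π0) = Λbar := by
    rw [hcirc0]; exact perronRoot_diagonal hk h0.le
  -- per-index facts
  have hFgood : ∀ p : I, IsSubdist (F p).1 ∧ IsKernel (F p).2 ∧
      perronRoot (circ (F p).2 (F p).1) = Λbar := by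
    intro p
    by_cases h : Valid p
    · simp only [hF, dif_pos h]
      obtain ⟨hsub, hsymm, hroot⟩ := h
      set ρ := perronRoot (circ (κt p.2) (πt p.1)) with hρ
      have hρ0 : 0 < ρ := lt_of_lt_of_le h0 hroot
      have hfac0 : 0 < Λbar / ρ := div_pos h0 hρ0
      refine ⟨hsub, ⟨hsymm.smul _, ?_⟩, ?_⟩
      · intro i j
        simp only [Matrix.smul_apply, smul_eq_mul]
        exact mul_nonneg hfac0.le (hκt_nonneg p.2 i j)
      · have hcs : circ ((Λbar / ρ) • κt p.2) (πt p.1) = (Λbar / ρ) • circ (κt p.2) (πt p.1) := by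
          ext i j
          simp only [circ, Matrix.of_apply, Matrix.smul_apply, smul_eq_mul]
          ring
        rw [hcs, perronRoot_smul hk hfac0, ← hρ, div_mul_cancel₀ _ hρ0.ne']
    · simp only [hF, dif_neg h]
      exact ⟨hdef_sub, hdef_ker, hdef_root⟩
  set e := Fintype.equivFin I with he
  refine ⟨Fintype.card I, fun m => (F (e.symm m)).1, fun m => (F (e.symm m)).2,
    Fintype.card_pos, fun m => (hFgood _).1, fun m => (hFgood _).2.1,
    fun m => (hFgood _).2.2, ?_⟩
  -- domination
  intro π κ hπ hκ hκK hΛρ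
  have hπ1 : ∀ i, π i ≤ 1 := fun i =>
    le_trans (Finset.single_le_sum (fun j _ => hπ.1 j) (Finset.mem_univ i)) hπ.2
  have hκK' : ∀ i j, κ i j ≤ K' := fun i j => (hκK i j).trans (le_max_left _ _)
  -- rounding
  have key : ∀ x : ℝ, 0 ≤ x →
      0 ≤ ((Nat.floor (x/δ) : ℕ) : ℝ) * δ ∧ ((Nat.floor (x/δ) : ℕ) : ℝ) * δ ≤ x ∧
        x - δ ≤ ((Nat.floor (x/δ) : ℕ) : ℝ) * δ := by
    intro x hx
    have h1 : ((Nat.floor (x/δ) : ℕ) : ℝ) ≤ x/δ := Nat.floor_le (by positivity)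
    have h2 : x/δ < ((Nat.floor (x/δ) : ℕ) : ℝ) + 1 := Nat.lt_floor_add_one _
    refine ⟨by positivity, ?_, ?_⟩
    · calc ((Nat.floor (x/δ) : ℕ) : ℝ) * δ ≤ (x/δ) * δ := by nlinarith
        _ = x := by field_simp
    · have : x = (x/δ) * δ := by field_simp
      nlinarith
  have ha_lt : ∀ i, Nat.floor (π i / δ) < N + 1 := by
    intro i
    have h1 : π i / δ ≤ 1 / δ := by
      exact div_le_div_of_nonneg_right (hπ1 i) hδ0.le
    have := (Nat.floor_le_floor h1).trans (Nat.floor_le_ceil ((1:ℝ)/δ))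
    omega
  have hb_lt : ∀ i j, Nat.floor (κ i j / δ) < N' + 1 := by
    intro i j
    have h1 : κ i j / δ ≤ K' / δ := by
      exact div_le_div_of_nonneg_right (hκK' i j) hδ0.le
    have := (Nat.floor_le_floor h1).trans (Nat.floor_le_ceil (K'/δ))
    omega
  set a : Fin k → Fin (N+1) := fun i => ⟨Nat.floor (π i / δ), ha_lt i⟩ with ha
  set b : Fin k → Fin k → Fin (N'+1) := fun i j => ⟨Nat.floor (κ i j / δ), hb_lt i j⟩ with hb
  set p : I := (a, b) with hp
  set π' := πt a with hπ'
  set κ' := κt b with hκ'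
  have hπ'0 : ∀ i, 0 ≤ π' i := fun i => (key (π i) (hπ.1 i)).1
  have hπ'le : ∀ i, π' i ≤ π i := fun i => (key (π i) (hπ.1 i)).2.1
  have hπ'ge : ∀ i, π i - δ ≤ π' i := fun i => (key (π i) (hπ.1 i)).2.2
  have hκ'0 : ∀ i j, 0 ≤ κ' i j := fun i j => (key (κ i j) (hκ.2 i j)).1
  have hκ'le : ∀ i j, κ' i j ≤ κ i j := fun i j => (key (κ i j) (hκ.2 i j)).2.1
  have hκ'ge : ∀ i j, κ i j - δ ≤ κ' i j := fun i j => (key (κ i j) (hκ.2 i j)).2.2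
  have hκ'symm : κ'.IsSymm := by
    ext i j
    simp only [Matrix.transpose_apply, hκ', hκt, Matrix.of_apply, hb]
    rw [hκ.1.apply i j]
  -- the perron root bound
  have hvalid : Valid p := by
    refine ⟨⟨hπ'0, (Finset.sum_le_sum fun i _ => hπ'le i).trans hπ.2⟩, hκ'symm, ?_⟩
    -- entrywise bound on symmetrised matrices
    have hentry : ∀ i j, symmMat κ π i j ≤ symmMat κ' π' i j + c := by
      intro i j
      simp only [symmMat, Matrix.of_apply]
      have sq_facts : ∀ i, Real.sqrt (π' i) ≤ Real.sqrt (π i) ∧ Real.sqrt (π i) ≤ 1 ∧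
          Real.sqrt (π i) - Real.sqrt (π' i) ≤ s ∧ 0 ≤ Real.sqrt (π' i) := by
        intro i
        refine ⟨Real.sqrt_le_sqrt (hπ'le i), ?_, ?_, Real.sqrt_nonneg _⟩
        · rw [show (1:ℝ) = Real.sqrt 1 by simp]
          exact Real.sqrt_le_sqrt (hπ1 i)
        · refine (sqrt_sub_sqrt_le (hπ'0 i) (hπ'le i)).trans ?_
          rw [← hsqδ]
          exact Real.sqrt_le_sqrt (by linarith [hπ'ge i])
      obtain ⟨hii1, hii2, hii3, hii4⟩ := sq_facts i
      obtain ⟨hjj1, hjj2, hjj3, hjj4⟩ := sq_facts j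
      have hκij := hκ.2 i j
      have hκ'ij := hκ'0 i j
      have hA1 : Real.sqrt (π' i) * (κ i j - κ' i j) * Real.sqrt (π' j) ≤ δ := by
        have h1 : κ i j - κ' i j ≤ δ := by linarith [hκ'ge i j]
        have h2 : 0 ≤ κ i j - κ' i j := by linarith [hκ'le i j]
        have hxy0 : 0 ≤ Real.sqrt (π' i) * Real.sqrt (π' j) := mul_nonneg hii4 hjj4
        have hxy1 : Real.sqrt (π' i) * Real.sqrt (π' j) ≤ 1 :=
          mul_le_one₀ (hii1.trans hii2) hjj4 (hjj1.trans hjj2)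
        nlinarith [mul_le_mul h1 hxy1 hxy0 hδ0.le]
      have ht1 : Real.sqrt (π i) * (Real.sqrt (π j) - Real.sqrt (π' j)) ≤ 1 * s :=
        mul_le_mul hii2 hjj3 (by linarith) one_pos.le
      have ht2 : Real.sqrt (π' j) * (Real.sqrt (π i) - Real.sqrt (π' i)) ≤ 1 * s :=
        mul_le_mul (hjj1.trans hjj2) hii3 (by linarith) one_pos.le
      have h5 : Real.sqrt (π i) * Real.sqrt (π j) -
          Real.sqrt (π' i) * Real.sqrt (π' j) ≤ 2 * s := by nlinarith [ht1, ht2]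
      have h6 : 0 ≤ Real.sqrt (π i) * Real.sqrt (π j) -
          Real.sqrt (π' i) * Real.sqrt (π' j) := by
        have := mul_le_mul hii1 hjj1 hjj4 (Real.sqrt_nonneg (π i))
        linarith
      have hA2 : Real.sqrt (π i) * κ i j * Real.sqrt (π j) -
          Real.sqrt (π' i) * κ i j * Real.sqrt (π' j) ≤ 2 * K' * s := by
        have : Real.sqrt (π i) * κ i j * Real.sqrt (π j) -
            Real.sqrt (π' i) * κ i j * Real.sqrt (π' j) =
            κ i j * (Real.sqrt (π i) * Real.sqrt (π j) -
              Real.sqrt (π' i) * Real.sqrt (π' j)) := by ring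
        rw [this]
        calc κ i j * (Real.sqrt (π i) * Real.sqrt (π j) -
              Real.sqrt (π' i) * Real.sqrt (π' j)) ≤ K' * (2 * s) := by
              apply mul_le_mul (hκK' i j) h5 h6 hK'0.le
          _ = 2 * K' * s := by ring
      have : Real.sqrt (π' i) * κ i j * Real.sqrt (π' j) -
          Real.sqrt (π' i) * κ' i j * Real.sqrt (π' j) ≤ δ := by
        calc Real.sqrt (π' i) * κ i j * Real.sqrt (π' j) -
            Real.sqrt (π' i) * κ' i j * Real.sqrt (π' j)
            = Real.sqrt (π' i) * (κ i j - κ' i j) * Real.sqrt (π' j) := by ring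
          _ ≤ δ := hA1
      simp only [hc]
      linarith
    have hsymm_nonneg : ∀ i j, 0 ≤ symmMat κ π i j := by
      intro i j
      simp only [symmMat, Matrix.of_apply]
      have := hκ.2 i j
      positivity
    set Cmat : Matrix (Fin k) (Fin k) ℝ := Matrix.of fun _ _ => c with hCmat
    have hmono : perronRoot (symmMat κ π) ≤ perronRoot (symmMat κ' π' + Cmat) := by
      refine perronRoot_mono hk hsymm_nonneg ?_
      intro i j
      simpa [hCmat] using hentry i j
    have hsymm'symm : (symmMat κ' π').IsSymm := by
      ext i j
      simp only [Matrix.transpose_apply, symmMat, Matrix.of_apply]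
      rw [hκ'symm.apply i j]
      ring
    have hCsymm : Cmat.IsSymm := by
      ext i j; simp [hCmat]
    have htri : perronRoot (symmMat κ' π' + Cmat) ≤
        perronRoot (symmMat κ' π') + perronRoot Cmat :=
      perronRoot_add_le hk hsymm'symm hCsymm
    have hCle : perronRoot Cmat ≤ (k : ℝ) * c := by
      refine perronRoot_le_const hk hc0 ?_
      intro i j
      simp [hCmat, abs_of_nonneg hc0]
    have he1 : perronRoot (circ κ π) = perronRoot (symmMat κ π) :=
      perronRoot_circ_eq_symm hk κ hπ.1
    have he2 : perronRoot (circ κ' π') = perronRoot (symmMat κ' π') :=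
      perronRoot_circ_eq_symm hk κ' hπ'0
    have : Λ ≤ perronRoot (circ κ' π') + ε := by
      calc Λ ≤ perronRoot (circ κ π) := hΛρ
        _ = perronRoot (symmMat κ π) := he1
        _ ≤ perronRoot (symmMat κ' π' + Cmat) := hmono
        _ ≤ perronRoot (symmMat κ' π') + perronRoot Cmat := htri
        _ ≤ perronRoot (circ κ' π') + (k : ℝ) * c := by rw [← he2]; linarith
        _ ≤ perronRoot (circ κ' π') + ε := by linarith
    simp only [hε] at this ⊢
    linarith
  -- assemble
  refine ⟨e p, ?_, ?_⟩
  · intro i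
    simp only [Equiv.symm_apply_apply, hF, dif_pos hvalid]
    exact hπ'le i
  · intro i j
    simp only [Equiv.symm_apply_apply, hF, dif_pos hvalid]
    simp only [Matrix.smul_apply, smul_eq_mul]
    set ρ := perronRoot (circ (κt p.2) (πt p.1)) with hρ
    have hρb : Λbar ≤ ρ := hvalid.2.2
    have hρ0 : 0 < ρ := lt_of_lt_of_le h0 hρb
    have hfac1 : Λbar / ρ ≤ 1 := (div_le_one hρ0).mpr hρb
    calc Λbar / ρ * κt p.2 i j ≤ 1 * κt p.2 i j :=
          mul_le_mul_of_nonneg_right hfac1 (hκt_nonneg p.2 i j)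
      _ = κ' i j := by rw [one_mul]
      _ ≤ κ i j := hκ'le i j
end

section
/- Let ε > 0 and let α > 0 be a real number satisfying α = 1 − e^{−(1+ε)α}. Then (a) α ≤ 2ε, and (b) for every real x ≥ α one has x ≥ 1 − e^{−(1+ε)x}. -/
open Real Set

private lemma deriv_aux1 (u : ℝ) :
    HasDerivAt (fun u : ℝ => (1 - u + u^2/2) - Real.exp (-u)) (-1 + u + Real.exp (-u)) u := by
  have h1 : HasDerivAt (fun u : ℝ => Real.exp (-u)) (-Real.exp (-u)) u := by
    simpa using (hasDerivAt_neg u).exp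
  have h2 : HasDerivAt (fun u : ℝ => 1 - u + u^2/2) (-1 + u) u := by
    have := ((hasDerivAt_pow 2 u).div_const 2)
    have h3 : HasDerivAt (fun u : ℝ => 1 - u) (-1) u := by
      simpa using (hasDerivAt_id u).const_sub 1
    exact (h3.add this).congr_deriv (by norm_num)
  exact (h2.sub h1).congr_deriv (by ring)

lemma exp_neg_le_quad {u : ℝ} (hu : 0 ≤ u) : Real.exp (-u) ≤ 1 - u + u^2/2 := by
  have hmono : MonotoneOn (fun u : ℝ => (1 - u + u^2/2) - Real.exp (-u)) (Ici 0) := by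
    apply monotoneOn_of_deriv_nonneg (convex_Ici 0)
    · exact fun x _ => ((deriv_aux1 x).continuousAt).continuousWithinAt
    · exact fun x _ => ((deriv_aux1 x).differentiableAt).differentiableWithinAt
    · intro x hx
      rw [(deriv_aux1 x).deriv]
      have := Real.one_sub_le_exp_neg x
      linarith
  have h0 := hmono (self_mem_Ici) (mem_Ici.2 hu) hu
  simp at h0
  linarith

private lemma deriv_aux2 (u : ℝ) :
    HasDerivAt (fun u : ℝ => Real.exp (-u) - (1 - u + u^2/2 - u^3/6))
      (-Real.exp (-u) - (-1 + u - u^2/2)) u := by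
  have h1 : HasDerivAt (fun u : ℝ => Real.exp (-u)) (-Real.exp (-u)) u := by
    simpa using (hasDerivAt_neg u).exp
  have h2 : HasDerivAt (fun u : ℝ => 1 - u + u^2/2 - u^3/6) (-1 + u - u^2/2) u := by
    have ha := ((hasDerivAt_pow 2 u).div_const 2)
    have hb := ((hasDerivAt_pow 3 u).div_const 6)
    have h3 : HasDerivAt (fun u : ℝ => 1 - u) (-1) u := by
      simpa using (hasDerivAt_id u).const_sub 1
    have := (h3.add ha).sub hb
    exact this.congr_deriv (by norm_num; ring)
  exact h1.sub h2

lemma cubic_le_exp_neg {u : ℝ} (hu : 0 ≤ u) : 1 - u + u^2/2 - u^3/6 ≤ Real.exp (-u) := by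
  have hmono : MonotoneOn (fun u : ℝ => Real.exp (-u) - (1 - u + u^2/2 - u^3/6)) (Ici 0) := by
    apply monotoneOn_of_deriv_nonneg (convex_Ici 0)
    · exact fun x _ => ((deriv_aux2 x).continuousAt).continuousWithinAt
    · exact fun x _ => ((deriv_aux2 x).differentiableAt).differentiableWithinAt
    · intro x hx
      rw [(deriv_aux2 x).deriv]
      have hx0 : (0:ℝ) ≤ x := le_of_lt (by simpa using hx)
      have := exp_neg_le_quad hx0
      linarith
  have h0 := hmono (self_mem_Ici) (mem_Ici.2 hu) hu
  simp at h0
  linarith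

/-- Lemma 5.4 (alphaelemma): properties of the fixed point α of x ↦ 1 − e^{−(1+ε)x}. -/
theorem alpha_epsilon_lemma (ε α : ℝ) (hε : 0 < ε) (hα : 0 < α)
    (hfix : α = 1 - Real.exp (-(1 + ε) * α)) :
    α ≤ 2 * ε ∧ ∀ x : ℝ, α ≤ x → 1 - Real.exp (-(1 + ε) * x) ≤ x := by
  have hexp : Real.exp (-(1 + ε) * α) = 1 - α := by linarith
  have hα1 : α < 1 := by
    have := Real.exp_pos (-(1 + ε) * α)
    linarith
  have hv0 : (0:ℝ) ≤ (1 + ε) * α := by positivity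
  -- ε ≤ (1+ε)α, from (1+v) ≤ e^v with v = (1+ε)α
  have hd : (1 + ε) * (1 - α) ≤ 1 := by
    have h1 := Real.add_one_le_exp ((1 + ε) * α)
    have h2 : Real.exp ((1 + ε) * α) * Real.exp (-(1 + ε) * α) = 1 := by
      rw [← Real.exp_add, show (1 + ε) * α + -(1 + ε) * α = 0 by ring, Real.exp_zero]
    rw [hexp] at h2
    nlinarith [Real.exp_pos ((1 + ε) * α), mul_le_mul_of_nonneg_right h1 (le_of_lt (by linarith : (0:ℝ) < 1 - α))]
  constructor
  · -- part (a)
    rcases le_or_gt (1/2 : ℝ) ε with hc | hc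
    · linarith
    · have hcub := cubic_le_exp_neg hv0
      rw [show -((1 + ε) * α) = -(1 + ε) * α by ring, hexp] at hcub
      -- P ≥ 0 : 6ε - 3(1+ε)²α + (1+ε)³α² ≥ 0 (after dividing cubic inequality by α)
      have hP : 0 ≤ 6 * ε - 3 * (1 + ε)^2 * α + (1 + ε)^3 * α^2 := by
        have h6 : 0 ≤ α * (6 * ε - 3 * (1 + ε)^2 * α + (1 + ε)^3 * α^2) := by nlinarith [hcub]
        nlinarith [h6, hα]
      by_contra hcon
      push_neg at hcon
      have h1 : 0 ≤ (α - 2*ε) * (3 - (1+ε)*(α + 2*ε)) * (1+ε)^2 := by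
        have hb : 0 ≤ 3 - (1+ε)*(α + 2*ε) := by nlinarith
        exact mul_nonneg (mul_nonneg (by linarith) hb) (by positivity)
      have hq : 0 < 4 - 3*ε - 6*ε^2 - 2*ε^3 := by
        nlinarith [mul_pos hε hε, mul_pos (mul_pos hε hε) hε]
      have h2 : 0 < ε^2 * (4 - 3*ε - 6*ε^2 - 2*ε^3) := mul_pos (pow_pos hε 2) hq
      nlinarith [hP, h1, h2]
  · -- part (b)
    intro x hx
    have key : Real.exp (-(1 + ε) * x) = (1 - α) * Real.exp (-((1 + ε) * (x - α))) := by
      rw [← hexp, ← Real.exp_add]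
      congr 1
      ring
    have hEt := Real.one_sub_le_exp_neg ((1 + ε) * (x - α))
    have hmul : (1 - α) * (1 - (1 + ε) * (x - α)) ≤ (1 - α) * Real.exp (-((1 + ε) * (x - α))) :=
      mul_le_mul_of_nonneg_left hEt (by linarith)
    have hdx : (1 + ε) * (1 - α) * (x - α) ≤ x - α := by
      nlinarith [mul_le_mul_of_nonneg_right hd (by linarith : (0:ℝ) ≤ x - α)]
    rw [key]
    nlinarith [hmul, hdx]
end

section
/- Fix η, ε ∈ (0,1). There exists a constant M < ∞, depending only on η and k, such that: for every π ∈ Π_{≤1} with π_i ≥ η for all i ∈ [k], and every symmetric k×k matrix κ with all entries in [η,∞) satisfying ρ(κ∘π) ≤ 1 + ε, every vector ζ ∈ ℝ_{≥0}^k satisfying ζ_i = 1 − exp(−[(κ∘π)ζ]_i) for all i ∈ [k] satisfies Σ_{i∈[k]} π_i ζ_i ≤ Mε. -/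
open Matrix

lemma mem_spectrum_complex {k : ℕ} (A : Matrix (Fin k) (Fin k) ℝ) {μ : ℝ}
    (h : μ ∈ spectrum ℝ A) : (μ : ℂ) ∈ spectrum ℂ (A.map Complex.ofReal) := by
  rw [spectrum.mem_iff] at h ⊢
  intro hc
  apply h
  rw [Matrix.isUnit_iff_isUnit_det] at hc ⊢
  have heq : (algebraMap ℂ (Matrix (Fin k) (Fin k) ℂ) (μ:ℂ) - A.map Complex.ofReal)
      = (algebraMap ℝ (Matrix (Fin k) (Fin k) ℝ) μ - A).map Complex.ofRealHom := by
    ext i j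
    simp [Matrix.algebraMap_matrix_apply, Matrix.map_apply, apply_ite]
  rw [heq] at hc
  rw [isUnit_iff_ne_zero] at hc ⊢
  intro h0
  apply hc
  rw [← RingHom.mapMatrix_apply, ← RingHom.map_det, h0, map_zero]

lemma quad_form_le {k : ℕ} {S : Matrix (Fin k) (Fin k) ℝ} (hS : S.IsHermitian) {C : ℝ}
    (h : ∀ i, hS.eigenvalues i ≤ C) (w : Fin k → ℝ) :
    w ⬝ᵥ (S *ᵥ w) ≤ C * (w ⬝ᵥ w) := by
  have hcoe : (RCLike.ofReal ∘ hS.eigenvalues : Fin k → ℝ) = hS.eigenvalues := by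
    funext i; simp
  have hUU : (hS.eigenvectorUnitary : Matrix (Fin k) (Fin k) ℝ) *
      ((hS.eigenvectorUnitary : Matrix (Fin k) (Fin k) ℝ))ᴴ = 1 := by
    rw [← Matrix.star_eq_conjTranspose]
    exact (Matrix.mem_unitaryGroup_iff).mp hS.eigenvectorUnitary.2
  have hPSD : (C • (1 : Matrix (Fin k) (Fin k) ℝ) - S).PosSemidef := by
    have h2 : (diagonal fun i => C - hS.eigenvalues i)
        = C • (1 : Matrix (Fin k) (Fin k) ℝ) - diagonal hS.eigenvalues := by
      rw [smul_one_eq_diagonal, ← diagonal_sub]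
    have h1 : C • (1 : Matrix (Fin k) (Fin k) ℝ) - S
        = (hS.eigenvectorUnitary : Matrix (Fin k) (Fin k) ℝ) *
          (diagonal fun i => C - hS.eigenvalues i) *
          ((hS.eigenvectorUnitary : Matrix (Fin k) (Fin k) ℝ))ᴴ := by
      rw [h2, Matrix.mul_sub, Matrix.sub_mul, mul_smul_comm, Matrix.mul_one, smul_mul_assoc, hUU]
      congr 1
      conv_lhs => rw [hS.spectral_theorem, hcoe]
      rw [Unitary.conjStarAlgAut_apply, Matrix.star_eq_conjTranspose]
    rw [h1]
    exact (Matrix.posSemidef_diagonal_iff.mpr fun i =>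
      sub_nonneg.mpr (h i)).mul_mul_conjTranspose_same _
  have hq := hPSD.dotProduct_mulVec_nonneg w
  simp only [star_trivial, Matrix.sub_mulVec, Matrix.smul_mulVec, Matrix.one_mulVec,
    dotProduct_sub, dotProduct_smul, smul_eq_mul] at hq
  linarith

lemma zeta_quad {x : ℝ} (hx : 0 ≤ x) :
    (1 - Real.exp (-x)) + (1 - Real.exp (-x))^2 / 4 ≤ x := by
  set z := 1 - Real.exp (-x) with hz
  have hz0 : 0 ≤ z := by
    have : Real.exp (-x) ≤ 1 := Real.exp_le_one_iff.mpr (by linarith)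
    simp [hz]; linarith
  have hz1 : z ≤ 1 := by
    have := Real.exp_pos (-x); simp [hz]; linarith
  have hzx : z ≤ x := by
    have := Real.add_one_le_exp (-x); simp [hz]; linarith
  rcases le_or_gt x 2 with h2 | h2
  · have ha : (0:ℝ) ≤ 1 - x/2 := by linarith
    have hb : 1 - x/2 ≤ Real.exp (-(x/2)) := by
      have := Real.add_one_le_exp (-(x/2)); linarith
    have hsq : (1 - x/2) * (1 - x/2) ≤ Real.exp (-x) := by
      calc (1 - x/2) * (1 - x/2) ≤ Real.exp (-(x/2)) * Real.exp (-(x/2)) :=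
            mul_le_mul hb hb ha (Real.exp_pos _).le
        _ = Real.exp (-x) := by rw [← Real.exp_add]; ring_nf
    have hzq : z ≤ x - x^2/4 := by
      have : 1 - Real.exp (-x) ≤ 1 - (1 - x/2)*(1-x/2) := by linarith
      calc z ≤ 1 - (1 - x/2)*(1-x/2) := this
        _ = x - x^2/4 := by ring
    nlinarith [mul_le_mul hzx hzx hz0 hx]
  · nlinarith

/-- Lemma 5.5 (O1boundzeta): uniform O(ε) bound on survival probabilities of near-critical
multitype Poisson branching processes. -/
theorem survival_probability_bound
    {k : ℕ} (hk : 0 < k) (η : ℝ) (hη0 : 0 < η) (hη1 : η < 1) :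
    ∃ M : ℝ, ∀ ε : ℝ, 0 < ε → ε < 1 →
      ∀ π : Fin k → ℝ, IsSubdist π → (∀ i, η ≤ π i) →
      ∀ κ : Matrix (Fin k) (Fin k) ℝ, κ.IsSymm → (∀ i j, η ≤ κ i j) →
        perronRoot (circ κ π) ≤ 1 + ε →
      ∀ ζ : Fin k → ℝ, (∀ i, 0 ≤ ζ i) →
        (∀ i, ζ i = 1 - Real.exp (-((circ κ π).mulVec ζ i))) →
      ∑ i, π i * ζ i ≤ M * ε := by
  use 4
  intro ε hε0 hε1 π hπ hπη κ hκsym hκη hρ ζ hζ0 hζfix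
  have hπ0 : ∀ i, 0 < π i := fun i => lt_of_lt_of_le hη0 (hπη i)
  have hκ0 : ∀ i j, 0 ≤ κ i j := fun i j => le_trans hη0.le (hκη i j)
  -- nonnegativity of x
  have hx0 : ∀ i, 0 ≤ (circ κ π).mulVec ζ i := by
    intro i
    show 0 ≤ ∑ j, circ κ π i j * ζ j
    apply Finset.sum_nonneg
    intro j _
    show 0 ≤ κ i j * π j * ζ j
    exact mul_nonneg (mul_nonneg (hκ0 i j) (hπ0 j).le) (hζ0 j)
  -- pointwise key inequality
  have key : ∀ i, ζ i + (ζ i)^2/4 ≤ (circ κ π).mulVec ζ i := by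
    intro i
    rw [hζfix i]
    exact zeta_quad (hx0 i)
  -- symmetrized matrix
  set d : Fin k → ℝ := fun i => Real.sqrt (π i) with hd
  have hdpos : ∀ i, 0 < d i := fun i => Real.sqrt_pos.mpr (hπ0 i)
  have hd2 : ∀ i, d i * d i = π i := fun i => Real.mul_self_sqrt (hπ0 i).le
  set S : Matrix (Fin k) (Fin k) ℝ := diagonal d * κ * diagonal d with hSdef
  have hSentry : ∀ i j, S i j = d i * κ i j * d j := by
    intro i j
    rw [hSdef, Matrix.mul_diagonal, Matrix.diagonal_mul]
  have hS : S.IsHermitian := by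
    rw [Matrix.IsHermitian]
    ext i j
    rw [Matrix.conjTranspose_apply, star_trivial, hSentry, hSentry, hκsym.apply i j]
    ring
  -- the unit
  have humul : diagonal d * diagonal (fun i => (d i)⁻¹) = 1 := by
    rw [diagonal_mul_diagonal]
    have : (fun i => d i * (d i)⁻¹) = fun _ => (1:ℝ) :=
      funext fun i => mul_inv_cancel₀ (hdpos i).ne'
    rw [this, diagonal_one]
  have humul' : diagonal (fun i => (d i)⁻¹) * diagonal d = 1 := by
    rw [diagonal_mul_diagonal]
    have : (fun i => (d i)⁻¹ * d i) = fun _ => (1:ℝ) :=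
      funext fun i => inv_mul_cancel₀ (hdpos i).ne'
    rw [this, diagonal_one]
  set u : (Matrix (Fin k) (Fin k) ℝ)ˣ :=
    ⟨diagonal d, diagonal (fun i => (d i)⁻¹), humul, humul'⟩ with hu
  have hTS : S = (u : Matrix (Fin k) (Fin k) ℝ) * (circ κ π) *
      ((u⁻¹ : (Matrix (Fin k) (Fin k) ℝ)ˣ) : Matrix (Fin k) (Fin k) ℝ) := by
    ext i j
    show S i j = (diagonal d * (circ κ π) * diagonal (fun i => (d i)⁻¹)) i j
    rw [Matrix.mul_diagonal, Matrix.diagonal_mul, hSentry]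
    show d i * κ i j * d j = d i * (κ i j * π j) * (d j)⁻¹
    have hne : d j ≠ 0 := (hdpos j).ne'
    rw [← hd2 j, show d i * (κ i j * (d j * d j)) * (d j)⁻¹
      = d i * κ i j * d j * (d j * (d j)⁻¹) from by ring, mul_inv_cancel₀ hne, mul_one]
  have hspec : spectrum ℝ S = spectrum ℝ (circ κ π) := by
    rw [hTS]; exact spectrum.units_conjugate
  -- eigenvalue bound
  have heig : ∀ i, hS.eigenvalues i ≤ 1 + ε := by
    intro i
    have h1 : hS.eigenvalues i ∈ spectrum ℝ (circ κ π) := by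
      rw [← hspec]; exact hS.eigenvalues_mem_spectrum_real i
    have h2 := mem_spectrum_complex _ h1
    have hbdd : BddAbove ((fun z : ℂ => ‖z‖) '' spectrum ℂ ((circ κ π).map Complex.ofReal)) :=
      (((circ κ π).map Complex.ofReal).finite_spectrum.image _).bddAbove
    have h3 : ‖((hS.eigenvalues i : ℝ) : ℂ)‖ ≤ perronRoot (circ κ π) :=
      le_csSup hbdd ⟨_, h2, rfl⟩
    rw [Complex.norm_real, Real.norm_eq_abs] at h3
    calc hS.eigenvalues i ≤ |hS.eigenvalues i| := le_abs_self _
      _ ≤ perronRoot (circ κ π) := h3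
      _ ≤ 1 + ε := hρ
  -- quadratic form
  set w : Fin k → ℝ := fun i => d i * ζ i with hw
  have hq := quad_form_le hS heig w
  have hL : w ⬝ᵥ (S *ᵥ w) = ∑ i, π i * ζ i * ((circ κ π).mulVec ζ i) := by
    simp only [dotProduct, Matrix.mulVec, Finset.mul_sum]
    refine Finset.sum_congr rfl fun i _ => Finset.sum_congr rfl fun j _ => ?_
    rw [hSentry]
    show w i * (d i * κ i j * d j * w j) = π i * ζ i * ((κ i j * π j) * ζ j)
    rw [hw, ← hd2 i, ← hd2 j]
    ring
  have hR : w ⬝ᵥ w = ∑ i, π i * ζ i^2 := by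
    simp only [dotProduct]
    refine Finset.sum_congr rfl fun i _ => ?_
    rw [hw, ← hd2 i]
    ring
  rw [hL, hR] at hq
  -- sums
  set s1 := ∑ i, π i * ζ i with hs1
  set s2 := ∑ i, π i * ζ i^2 with hs2
  set s3 := ∑ i, π i * ζ i^3 with hs3
  have hs1nn : 0 ≤ s1 := Finset.sum_nonneg fun i _ => mul_nonneg (hπ0 i).le (hζ0 i)
  have hs2nn : 0 ≤ s2 := Finset.sum_nonneg fun i _ => mul_nonneg (hπ0 i).le (pow_nonneg (hζ0 i) 2)
  have hs3nn : 0 ≤ s3 := Finset.sum_nonneg fun i _ => mul_nonneg (hπ0 i).le (pow_nonneg (hζ0 i) 3)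
  have hsum1 : s2 + s3/4 ≤ ∑ i, π i * ζ i * ((circ κ π).mulVec ζ i) := by
    have e1 : s2 + s3/4 = ∑ i, π i * ζ i * (ζ i + (ζ i)^2/4) := by
      rw [hs2, hs3, Finset.sum_div, ← Finset.sum_add_distrib]
      exact Finset.sum_congr rfl fun i _ => by ring
    rw [e1]
    exact Finset.sum_le_sum fun i _ =>
      mul_le_mul_of_nonneg_left (key i) (mul_nonneg (hπ0 i).le (hζ0 i))
  have hs3le : s3 ≤ 4 * ε * s2 := by nlinarith
  have hCS1 : s2^2 ≤ s1 * s3 := by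
    refine Finset.sum_sq_le_sum_mul_sum_of_sq_eq_mul Finset.univ
      (f := fun i => π i * ζ i) (g := fun i => π i * ζ i^3) ?_ ?_ ?_
    · exact fun i _ => mul_nonneg (hπ0 i).le (hζ0 i)
    · exact fun i _ => mul_nonneg (hπ0 i).le (pow_nonneg (hζ0 i) 3)
    · exact fun i _ => by ring
  have hCS2 : s1^2 ≤ s2 := by
    have h := Finset.sum_sq_le_sum_mul_sum_of_sq_eq_mul Finset.univ
      (r := fun i => π i * ζ i) (f := fun i => π i) (g := fun i => π i * ζ i^2)
      (fun i _ => (hπ0 i).le)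
      (fun i _ => mul_nonneg (hπ0 i).le (pow_nonneg (hζ0 i) 2))
      (fun i _ => by ring)
    calc s1^2 ≤ (∑ i, π i) * s2 := h
      _ ≤ 1 * s2 := mul_le_mul_of_nonneg_right hπ.2 hs2nn
      _ = s2 := one_mul s2
  -- conclude
  by_contra hcon
  push_neg at hcon
  have h4 : 0 < s1 := lt_trans (by positivity) hcon
  have hs2pos : 0 < s2 := lt_of_lt_of_le (by positivity) hCS2
  have h6 : s2 * s2 ≤ (4*ε*s1) * s2 := by
    nlinarith [mul_le_mul_of_nonneg_left hs3le hs1nn, hCS1]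
  have h7 : s2 ≤ 4*ε*s1 := le_of_mul_le_mul_right h6 hs2pos
  have h8 : s1 * s1 ≤ (4*ε) * s1 := by nlinarith [hCS2, h7]
  have h9 : s1 ≤ 4*ε := le_of_mul_le_mul_right h8 h4
  linarith
end

section
/- Let (Ω, ℱ, P) be a probability space with a filtration (ℱ_m)_{0≤m≤N} indexed by {0,1,…,N}, and let (ξ_m)_{0≤m≤N} and (Y_m)_{0≤m≤N} be real-valued processes adapted to this filtration with ξ₀ = Y₀ = 0. Suppose (ξ_m) is almost surely nondecreasing in m with ξ_N ≤ 1 almost surely, and that for some δ ∈ (0,1) and integer K ≥ 1 the following hold almost surely for every m ∈ {0,1,…,N−1}: |Y_{m+1} − Y_m| ≤ ξ_{m+1} − ξ_m ≤ 1/K², and |E[Y_{m+1} − Y_m | ℱ_m]| ≤ δ·E[ξ_{m+1} − ξ_m | ℱ_m]. Then E[ max_{0≤m≤N} |Y_m| ] ≤ 2/K + δ. -/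
open MeasureTheory Finset Filter Set
open scoped ENNReal NNReal

section Aux

variable {Ω : Type*} {mΩ : MeasurableSpace Ω} {P : Measure Ω} [IsProbabilityMeasure P] {ℱ : Filtration ℕ mΩ}

lemma ptwise {N : ℕ} {x y : ℕ → ℝ} (hx0 : x 0 = 0) (hy0 : y 0 = 0)
    (hmono : ∀ m < N, x m ≤ x (m + 1)) (hxN : x N ≤ 1)
    (hdom : ∀ m < N, |y (m + 1) - y m| ≤ x (m + 1) - x m) :
    ∀ m ≤ N, 0 ≤ x m ∧ x m ≤ 1 ∧ |y m| ≤ x m := by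
  have key : ∀ m, m ≤ N → 0 ≤ x m ∧ |y m| ≤ x m := by
    intro m
    induction m with
    | zero => intro _; simp [hx0, hy0]
    | succ n ih =>
      intro hm
      have hn : n < N := Nat.lt_of_succ_le hm
      obtain ⟨h1, h2⟩ := ih hn.le
      constructor
      · exact h1.trans (hmono n hn)
      · have h3 := hdom n hn
        calc |y (n + 1)| = |y n + (y (n + 1) - y n)| := by congr 1; ring
        _ ≤ |y n| + |y (n + 1) - y n| := abs_add_le _ _
        _ ≤ x n + (x (n + 1) - x n) := add_le_add h2 h3
        _ = x (n + 1) := by ring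
  have chain : ∀ n, ∀ m, m ≤ n → n ≤ N → x m ≤ x n := by
    intro n
    induction n with
    | zero => intro m hmn _; obtain rfl := Nat.le_zero.1 hmn; exact le_rfl
    | succ k ih =>
      intro m hmn hnN
      rcases Nat.eq_or_lt_of_le hmn with h | h
      · rw [h]
      · exact (ih m (Nat.lt_succ_iff.1 h) (Nat.le_of_succ_le hnN)).trans
          (hmono k (Nat.lt_of_succ_le hnN))
  intro m hm
  obtain ⟨h1, h2⟩ := key m hm
  exact ⟨h1, (chain N m hm le_rfl).trans hxN, h2⟩




lemma myInt {f : Ω → ℝ} (hf : AEStronglyMeasurable f P) {C : ℝ}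
    (h : ∀ᵐ ω ∂P, |f ω| ≤ C) : Integrable f P :=
  (integrable_const C).mono' hf (by filter_upwards [h] with ω hω using by simpa using hω)

lemma sq_submartingale {M : ℕ → Ω → ℝ} (hM : Martingale M ℱ P)
    (C : ℕ → ℝ) (hbdd : ∀ n, ∀ᵐ ω ∂P, |M n ω| ≤ C n) :
    Submartingale (fun n ω => (M n ω) ^ 2) ℱ P := by
  have hmeas : ∀ n, AEStronglyMeasurable (M n) P :=
    fun n => ((hM.stronglyAdapted n).mono (ℱ.le n)).aestronglyMeasurable
  have hint : ∀ n, Integrable (M n) P := fun n => myInt (hmeas n) (hbdd n)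
  have hmul : ∀ n k, Integrable (fun ω => M n ω * M k ω) P := by
    intro n k
    refine myInt ((hmeas n).mul (hmeas k)) (C := C n * C k) ?_
    filter_upwards [hbdd n, hbdd k] with ω h1 h2
    calc |M n ω * M k ω| = |M n ω| * |M k ω| := abs_mul _ _
    _ ≤ C n * C k := mul_le_mul h1 h2 (abs_nonneg _) ((abs_nonneg _).trans h1)
  have hsq : ∀ n, Integrable (fun ω => M n ω ^ 2) P := by
    intro n; simpa [pow_two] using hmul n n
  refine submartingale_nat (fun n => by
      simpa [pow_two, Pi.mul_def] using (hM.stronglyAdapted n).mul (hM.stronglyAdapted n)) hsq ?_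
  intro n
  set D : Ω → ℝ := fun ω => M (n + 1) ω - M n ω with hD
  have hDint : Integrable D P := (hint (n + 1)).sub (hint n)
  have hDmeas : AEStronglyMeasurable D P := (hmeas (n + 1)).sub (hmeas n)
  have hMD : Integrable (M n * D) P := by
    have : (M n * D) = fun ω => (M n ω * M (n+1) ω) - M n ω * M n ω := by
      ext ω; simp [hD]; ring
    rw [this]; exact (hmul n (n+1)).sub (hmul n n)
  have hD2 : Integrable (fun ω => D ω ^ 2) P := by
    have : (fun ω => D ω ^ 2) = fun ω =>
        (M (n+1) ω * M (n+1) ω - M n ω * M (n+1) ω) - (M n ω * M (n+1) ω - M n ω * M n ω) := by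
      ext ω; simp [hD]; ring
    rw [this]; exact ((hmul _ _).sub (hmul _ _)).sub ((hmul _ _).sub (hmul _ _))
  have hsplit : (fun ω => M (n + 1) ω ^ 2) =
      (fun ω => M n ω ^ 2) + ((2 : ℝ) • (M n * D) + fun ω => D ω ^ 2) := by
    ext ω; simp [hD]; ring
  have hc1 : P[fun ω => M (n+1) ω ^ 2|ℱ n] =ᵐ[P]
      P[fun ω => M n ω ^ 2|ℱ n] + P[(2 : ℝ) • (M n * D) + fun ω => D ω ^ 2|ℱ n] := by
    rw [hsplit]
    exact condExp_add (hsq n) ((hMD.smul (2:ℝ)).add hD2) _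
  have hc2 : P[(2 : ℝ) • (M n * D) + (fun ω => D ω ^ 2)|ℱ n] =ᵐ[P]
      P[(2 : ℝ) • (M n * D)|ℱ n] + P[fun ω => D ω ^ 2|ℱ n] :=
    condExp_add (hMD.smul (2:ℝ)) hD2 _
  have hc3 : P[(2 : ℝ) • (M n * D)|ℱ n] =ᵐ[P] (2 : ℝ) • P[M n * D|ℱ n] :=
    condExp_smul (2:ℝ) (M n * D) _
  have hc4 : P[M n * D|ℱ n] =ᵐ[P] M n * P[D|ℱ n] :=
    condExp_mul_of_stronglyMeasurable_left (hM.stronglyAdapted n) hMD hDint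
  have hD0 : P[D|ℱ n] =ᵐ[P] 0 := by
    have h5 : P[D|ℱ n] =ᵐ[P] P[M (n+1)|ℱ n] - P[M n|ℱ n] :=
      condExp_sub (hint (n+1)) (hint n) _
    have h6 := hM.condExp_ae_eq (n.le_succ)
    have h7 : P[M n|ℱ n] = M n :=
      condExp_of_stronglyMeasurable (ℱ.le n) (hM.stronglyAdapted n) (hint n)
    filter_upwards [h5, h6] with ω h5 h6
    simp only [Pi.sub_apply, Pi.zero_apply] at *
    rw [h5, h6, h7, sub_self]
  have hsqn : P[fun ω => M n ω ^ 2|ℱ n] = fun ω => M n ω ^ 2 :=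
    condExp_of_stronglyMeasurable (ℱ.le n)
      (by simpa [pow_two, Pi.mul_def] using (hM.stronglyAdapted n).mul (hM.stronglyAdapted n)) (hsq n)
  have hD2nn : (0 : Ω → ℝ) ≤ᵐ[P] P[fun ω => D ω ^ 2|ℱ n] :=
    condExp_nonneg (Eventually.of_forall fun ω => sq_nonneg _)
  filter_upwards [hc1, hc2, hc3, hc4, hD0, hD2nn] with ω h1 h2 h3 h4 h5 h6
  simp only [Pi.add_apply, Pi.smul_apply, Pi.mul_apply, Pi.zero_apply, smul_eq_mul] at *
  rw [h1, h2, h3, h4, h5, hsqn]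
  simp only [mul_zero, add_zero]
  nlinarith [h6]


lemma max_abs_le {M : ℕ → Ω → ℝ} (hM : Martingale M ℱ P)
    (hsub : Submartingale (fun n ω => (M n ω) ^ 2) ℱ P) (N : ℕ) {a : ℝ} (ha : 0 < a)
    (C : ℝ) (hbdd : ∀ n, ∀ᵐ ω ∂P, |M n ω| ≤ C) :
    ∫ ω, (range (N + 1)).sup' nonempty_range_add_one (fun k => |M k ω|) ∂P
      ≤ a + (∫ ω, (M N ω) ^ 2 ∂P) / a := by
  set G : Ω → ℝ := fun ω => (range (N + 1)).sup' nonempty_range_add_one (fun k => |M k ω|) with hG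
  have hGmeas : Measurable G :=
    Finset.measurable_range_sup'' fun k _ =>
      ((hM.stronglyAdapted k).mono (ℱ.le k)).measurable.abs
  have hGnn : ∀ ω, 0 ≤ G ω := by
    intro ω
    simp only [hG]
    exact le_trans (abs_nonneg (M 0 ω)) (Finset.le_sup' (fun k => |M k ω|) (mem_range.mpr (Nat.succ_pos N)))
  set C' : ℝ := max a C with hC'
  have hGC : ∀ᵐ ω ∂P, G ω ≤ C' := by
    have h : ∀ᵐ ω ∂P, ∀ k, |M k ω| ≤ C := ae_all_iff.2 hbdd
    filter_upwards [h] with ω hω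
    exact Finset.sup'_le _ _ fun k _ => (hω k).trans (le_max_right a C)
  have hGint : Integrable G P := by
    refine (integrable_const C').mono' hGmeas.aestronglyMeasurable ?_
    filter_upwards [hGC] with ω hω
    rw [Real.norm_eq_abs, abs_of_nonneg (hGnn ω)]; exact hω
  set σ2 : ℝ := ∫ ω, (M N ω) ^ 2 ∂P with hσ2
  have hσ2nn : 0 ≤ σ2 := integral_nonneg fun ω => sq_nonneg _
  -- tail bound
  have tail : ∀ t : ℝ, 0 < t → (P {ω | t ≤ G ω}).toReal ≤ σ2 / t ^ 2 := by
    intro t ht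
    set ε : ℝ≥0 := ⟨t ^ 2, sq_nonneg t⟩ with hε
    have hsubset : {ω | t ≤ G ω} ⊆
        {ω | (ε : ℝ) ≤ (range (N + 1)).sup' nonempty_range_add_one fun k => (M k ω) ^ 2} := by
      intro ω hω
      simp only [Set.mem_setOf_eq, hG] at hω
      obtain ⟨k, hk, hkt⟩ := (Finset.le_sup'_iff _).1 hω
      refine Set.mem_setOf.2 (Finset.le_sup'_iff _ |>.2 ⟨k, hk, ?_⟩)
      calc (ε : ℝ) = t ^ 2 := rfl
      _ ≤ |M k ω| ^ 2 := by nlinarith [abs_nonneg (M k ω)]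
      _ = (M k ω) ^ 2 := sq_abs _
    have hmax := maximal_ineq hsub (fun n ω => sq_nonneg _) (ε := ε) N
    have hset : ENNReal.ofReal (∫ ω in {ω | (ε : ℝ) ≤
          (range (N + 1)).sup' nonempty_range_add_one fun k => (M k ω) ^ 2}, (M N ω) ^ 2 ∂P)
        ≤ ENNReal.ofReal σ2 := by
      refine ENNReal.ofReal_le_ofReal ?_
      exact setIntegral_le_integral (hsub.integrable N) (Eventually.of_forall fun ω => sq_nonneg _)
    have h1 : (ε : ℝ≥0∞) * P {ω | t ≤ G ω} ≤ ENNReal.ofReal σ2 := by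
      refine le_trans ?_ (hmax.trans hset)
      exact mul_le_mul_right (measure_mono hsubset) _
    have hε0 : (ε : ℝ≥0∞) ≠ 0 := by
      simp only [ne_eq, ENNReal.coe_eq_zero]
      intro h
      have : t ^ 2 = 0 := congrArg NNReal.toReal h
      nlinarith
    have h2 : P {ω | t ≤ G ω} ≤ ENNReal.ofReal σ2 / ε := by
      rw [ENNReal.le_div_iff_mul_le (Or.inl hε0) (Or.inl ENNReal.coe_ne_top), mul_comm]
      exact h1
    calc (P {ω | t ≤ G ω}).toReal ≤ (ENNReal.ofReal σ2 / ε).toReal :=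
          ENNReal.toReal_mono (by simp [ENNReal.div_eq_top, hε0]) h2
    _ = σ2 / t ^ 2 := by
        rw [ENNReal.toReal_div, ENNReal.toReal_ofReal hσ2nn, ENNReal.coe_toReal]
        rfl
  set h : ℝ → ℝ := fun t => (P {ω | t ≤ G ω}).toReal with hh
  have hanti : Antitone h := by
    intro s t hst
    exact ENNReal.toReal_mono (measure_ne_top _ _)
      (measure_mono fun ω hω => le_trans hst hω)
  have hhmeas : Measurable h := hanti.measurable
  have hh01 : ∀ t, 0 ≤ h t ∧ h t ≤ 1 := fun t =>
    ⟨ENNReal.toReal_nonneg,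
      ENNReal.toReal_le_of_le_ofReal zero_le_one (by simpa using prob_le_one)⟩
  have haC' : a ≤ C' := le_max_left a C
  have hIoc : ∫ ω, G ω ∂P = ∫ t in Ioc 0 C', h t :=
    hGint.integral_eq_integral_Ioc_meas_le (Eventually.of_forall hGnn) hGC
  have hintOn : ∀ s : Set ℝ, volume s < ⊤ → IntegrableOn h s volume := fun s hs =>
    Integrable.mono' ((integrableOn_const_iff (C := (1:ℝ))).2 (Or.inr hs))
      hhmeas.aestronglyMeasurable.restrict
      (Eventually.of_forall fun t => by
        rw [Real.norm_eq_abs, abs_of_nonneg (hh01 t).1]; exact (hh01 t).2)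
  have hsum : ∫ t in Ioc 0 C', h t = (∫ t in Ioc 0 a, h t) + ∫ t in Ioc a C', h t := by
    rw [(Set.Ioc_union_Ioc_eq_Ioc ha.le haC').symm]
    exact setIntegral_union (Set.Ioc_disjoint_Ioc_of_le le_rfl) measurableSet_Ioc
      (hintOn _ measure_Ioc_lt_top) (hintOn _ measure_Ioc_lt_top)
  have hb1 : ∫ t in Ioc 0 a, h t ≤ a := by
    have h1 : ∫ t in Ioc 0 a, h t ≤ ∫ t in Ioc (0:ℝ) a, (1:ℝ) := by
      refine setIntegral_mono_on (hintOn _ measure_Ioc_lt_top) ?_ measurableSet_Ioc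
        (fun t _ => (hh01 t).2)
      exact (integrableOn_const_iff (C := (1:ℝ))).2 (Or.inr measure_Ioc_lt_top)
    have h2 : ∫ t in Ioc (0:ℝ) a, (1:ℝ) = a := by
      simp [Real.volume_Ioc, ENNReal.toReal_ofReal ha.le, ha.le]
    linarith
  have hb2 : ∫ t in Ioc a C', h t ≤ σ2 * (a⁻¹ - C'⁻¹) := by
    have hintcont : IntegrableOn (fun t : ℝ => σ2 * t⁻¹ ^ 2) (Ioc a C') volume := by
      refine (ContinuousOn.integrableOn_compact isCompact_Icc ?_).mono_set Set.Ioc_subset_Icc_self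
      refine continuousOn_const.mul ((continuousOn_id.inv₀ ?_).pow 2)
      intro t ht; exact ne_of_gt (lt_of_lt_of_le ha ht.1)
    have hmono2 : ∫ t in Ioc a C', h t ≤ ∫ t in Ioc a C', σ2 * t⁻¹ ^ 2 := by
      refine setIntegral_mono_on (hintOn _ measure_Ioc_lt_top) hintcont measurableSet_Ioc ?_
      intro t ht
      calc h t ≤ σ2 / t ^ 2 := tail t (ha.trans ht.1)
      _ = σ2 * t⁻¹ ^ 2 := by rw [div_eq_mul_inv, inv_pow]
    have heval : ∫ t in Ioc a C', σ2 * t⁻¹ ^ 2 = σ2 * (a⁻¹ - C'⁻¹) := by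
      rw [← intervalIntegral.integral_of_le haC', intervalIntegral.integral_const_mul]
      congr 1
      have h0 : (0:ℝ) ∉ Set.uIcc a C' := by
        rw [Set.uIcc_of_le haC']
        intro hmem
        exact absurd hmem.1 (not_le.2 ha)
      have hz := integral_zpow (a := a) (b := C') (n := -2) (Or.inr ⟨by decide, h0⟩)
      have hfun : ∀ x : ℝ, x ^ (-2 : ℤ) = x⁻¹ ^ 2 := fun x => by
        rw [zpow_neg, inv_pow]; norm_cast
      simp only [hfun] at hz
      rw [hz]
      have ha' : a ≠ 0 := ne_of_gt ha
      have hC'0 : C' ≠ 0 := ne_of_gt (ha.trans_le haC')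
      norm_num [zpow_neg]
      try ring
    exact hmono2.trans_eq heval
  have hfinal : σ2 * (a⁻¹ - C'⁻¹) ≤ σ2 / a := by
    rw [div_eq_mul_inv]
    have : a⁻¹ - C'⁻¹ ≤ a⁻¹ := by
      have : (0:ℝ) ≤ C'⁻¹ := inv_nonneg.2 (ha.trans_le haC').le
      linarith
    exact mul_le_mul_of_nonneg_left this hσ2nn
  have hIoc' : ∫ ω, G ω ∂P ≤ a + σ2 / a := by
    rw [hIoc, hsum]
    have := add_le_add hb1 (hb2.trans hfinal)
    linarith
  exact hIoc'
lemma variance_sum_le {e : ℕ → Ω → ℝ} {C : ℝ}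
    (hmeas : ∀ k, StronglyMeasurable[ℱ (k + 1)] (e k))
    (hbdd : ∀ k, ∀ᵐ ω ∂P, |e k ω| ≤ C)
    (hzero : ∀ k, P[e k|ℱ k] =ᵐ[P] 0) (N : ℕ) :
    ∫ ω, (∑ k ∈ Finset.range N, e k ω) ^ 2 ∂P
      ≤ ∑ k ∈ Finset.range N, ∫ ω, (e k ω) ^ 2 ∂P := by
  have hmeas' : ∀ k, AEStronglyMeasurable (e k) P :=
    fun k => ((hmeas k).mono (ℱ.le (k + 1))).aestronglyMeasurable
  have hmul : ∀ j k, Integrable (fun ω => e j ω * e k ω) P := by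
    intro j k
    refine myInt ((hmeas' j).mul (hmeas' k)) (C := C * C) ?_
    filter_upwards [hbdd j, hbdd k] with ω h1 h2
    calc |e j ω * e k ω| = |e j ω| * |e k ω| := abs_mul _ _
    _ ≤ C * C := mul_le_mul h1 h2 (abs_nonneg _) ((abs_nonneg _).trans h1)
  have hoff : ∀ j k, j < k → ∫ ω, e j ω * e k ω ∂P = 0 := by
    intro j k hjk
    have hjmeas : StronglyMeasurable[ℱ k] (e j) := (hmeas j).mono (ℱ.mono hjk)
    have hek : Integrable (e k) P := myInt (hmeas' k) (hbdd k)
    have hprod : Integrable (e j * e k) P := hmul j k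
    have t1 : P[e j * e k|ℱ k] =ᵐ[P] e j * P[e k|ℱ k] :=
      condExp_mul_of_stronglyMeasurable_left hjmeas hprod hek
    have t2 : P[e j * e k|ℱ k] =ᵐ[P] 0 := by
      filter_upwards [t1, hzero k] with ω h1 h2
      simp only [Pi.mul_apply, Pi.zero_apply] at *
      rw [h1, h2, mul_zero]
    calc ∫ ω, e j ω * e k ω ∂P = ∫ ω, (P[e j * e k|ℱ k]) ω ∂P :=
          (integral_condExp (ℱ.le k)).symm
    _ = ∫ ω, (0 : Ω → ℝ) ω ∂P := integral_congr_ae t2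
    _ = 0 := by simp
  have hexp : ∀ ω, (∑ k ∈ Finset.range N, e k ω) ^ 2
      = ∑ j ∈ Finset.range N, ∑ k ∈ Finset.range N, e j ω * e k ω := by
    intro ω
    rw [pow_two, Finset.sum_mul_sum]
  calc ∫ ω, (∑ k ∈ Finset.range N, e k ω) ^ 2 ∂P
      = ∫ ω, ∑ j ∈ Finset.range N, ∑ k ∈ Finset.range N, e j ω * e k ω ∂P :=
        integral_congr_ae (Eventually.of_forall fun ω => hexp ω)
  _ = ∑ j ∈ Finset.range N, ∫ ω, ∑ k ∈ Finset.range N, e j ω * e k ω ∂P := by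
        rw [integral_finset_sum]
        exact fun j _ => integrable_finset_sum _ fun k _ => hmul j k
  _ = ∑ j ∈ Finset.range N, ∑ k ∈ Finset.range N, ∫ ω, e j ω * e k ω ∂P := by
        refine Finset.sum_congr rfl fun j _ => ?_
        rw [integral_finset_sum]
        exact fun k _ => hmul j k
  _ = ∑ j ∈ Finset.range N, ∫ ω, e j ω * e j ω ∂P := by
        refine Finset.sum_congr rfl fun j hj => ?_
        refine Finset.sum_eq_single j (fun k _ hkj => ?_) (fun hj' => absurd hj hj')
        rcases lt_or_gt_of_ne hkj with h | h
        · rw [show (fun ω => e j ω * e k ω) = fun ω => e k ω * e j ω from funext fun ω => mul_comm _ _]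
          exact hoff k j h
        · exact hoff j k h
  _ ≤ ∑ k ∈ Finset.range N, ∫ ω, (e k ω) ^ 2 ∂P := by
        refine le_of_eq (Finset.sum_congr rfl fun j _ => ?_)
        congr 1; ext ω; rw [pow_two]

lemma centered_sq_le {D : Ω → ℝ} (hD : AEStronglyMeasurable D P) {C : ℝ}
    (hbdd : ∀ᵐ ω ∂P, |D ω| ≤ C) (m : MeasurableSpace Ω) (hm : m ≤ mΩ) :
    ∫ ω, (D ω - (P[D|m]) ω) ^ 2 ∂P ≤ ∫ ω, (D ω) ^ 2 ∂P := by
  set c : Ω → ℝ := P[D|m] with hc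
  have hDint : Integrable D P := myInt hD hbdd
  have hcbdd : ∀ᵐ ω ∂P, |c ω| ≤ (C.toNNReal : ℝ) := by
    refine ae_bdd_condExp_of_ae_bdd ?_
    filter_upwards [hbdd] with ω hω
    exact hω.trans (Real.le_coe_toNNReal C)
  have hcmeas : @AEStronglyMeasurable Ω ℝ _ mΩ mΩ c P :=
    ((stronglyMeasurable_condExp (f := D) (μ := P)).mono hm).aestronglyMeasurable
  have hcD : Integrable (c * D) P := by
    refine myInt (hcmeas.mul hD) (C := (C.toNNReal : ℝ) * C) ?_
    filter_upwards [hbdd, hcbdd] with ω h1 h2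
    calc |(c * D) ω| = |c ω| * |D ω| := abs_mul _ _
    _ ≤ (C.toNNReal : ℝ) * C := mul_le_mul h2 h1 (abs_nonneg _) (NNReal.coe_nonneg _)
  have hc2 : Integrable (fun ω => c ω ^ 2) P := by
    refine myInt ((hcmeas.mul hcmeas).congr
      (Eventually.of_forall fun ω => (pow_two (c ω)).symm))
      (C := (C.toNNReal : ℝ) * (C.toNNReal : ℝ)) ?_
    filter_upwards [hcbdd] with ω h2
    calc |c ω ^ 2| = |c ω| * |c ω| := by rw [pow_two, abs_mul]
    _ ≤ _ := mul_le_mul h2 h2 (abs_nonneg _) (NNReal.coe_nonneg _)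
  have hD2 : Integrable (fun ω => D ω ^ 2) P := by
    refine myInt ((hD.mul hD).congr (Eventually.of_forall fun ω => (pow_two (D ω)).symm))
      (C := C * C) ?_
    filter_upwards [hbdd] with ω h1
    calc |D ω ^ 2| = |D ω| * |D ω| := by rw [pow_two, abs_mul]
    _ ≤ C * C := mul_le_mul h1 h1 (abs_nonneg _) ((abs_nonneg _).trans h1)
  have hpull : ∫ ω, c ω * D ω ∂P = ∫ ω, c ω ^ 2 ∂P := by
    have t1 : P[c * D|m] =ᵐ[P] c * P[D|m] :=
      condExp_mul_of_stronglyMeasurable_left stronglyMeasurable_condExp hcD hDint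
    calc ∫ ω, c ω * D ω ∂P = ∫ ω, (P[c * D|m]) ω ∂P := (integral_condExp hm).symm
    _ = ∫ ω, c ω * c ω ∂P := integral_congr_ae t1
    _ = ∫ ω, c ω ^ 2 ∂P := by congr 1; ext ω; rw [pow_two]
  have hexpand : ∫ ω, (D ω - c ω) ^ 2 ∂P
      = ∫ ω, D ω ^ 2 ∂P - 2 * ∫ ω, c ω * D ω ∂P + ∫ ω, c ω ^ 2 ∂P := by
    have hfun : (fun ω => (D ω - c ω) ^ 2)
        = fun ω => D ω ^ 2 - 2 * (c ω * D ω) + c ω ^ 2 := by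
      ext ω; ring
    have hcD' : Integrable (fun ω => c ω * D ω) P := hcD
    have h3 : Integrable (fun ω => 2 * (c ω * D ω)) P := hcD'.const_mul 2
    have h1 : Integrable (fun ω => D ω ^ 2 - 2 * (c ω * D ω)) P := hD2.sub h3
    rw [hfun, integral_add h1 hc2, integral_sub hD2 h3, MeasureTheory.integral_const_mul]
  have hc2nn : 0 ≤ ∫ ω, c ω ^ 2 ∂P := integral_nonneg fun ω => sq_nonneg _
  rw [hexpand, hpull]
  linarith


end Aux

/-- Lemma 5.14 (Yxilemma): a coupled-process estimate. If the increments of Y are dominated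
pathwise by the increments of the nondecreasing process ξ (which are at most 1/K², with
ξ_N ≤ 1), and the conditional expectations of the increments of Y are at most δ times those
of ξ, then E[max_m |Y_m|] ≤ 2/K + δ. -/
theorem coupled_process_estimate
    {Ω : Type*} {mΩ : MeasurableSpace Ω} (P : Measure Ω) [IsProbabilityMeasure P]
    (ℱ : Filtration ℕ mΩ) (N : ℕ) (ξ Y : ℕ → Ω → ℝ)
    (hξadapted : ∀ m ≤ N, StronglyMeasurable[ℱ m] (ξ m))
    (hYadapted : ∀ m ≤ N, StronglyMeasurable[ℱ m] (Y m))
    (hξ0 : ξ 0 = 0) (hY0 : Y 0 = 0)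
    (hξmono : ∀ᵐ ω ∂P, ∀ m < N, ξ m ω ≤ ξ (m + 1) ω)
    (hξN : ∀ᵐ ω ∂P, ξ N ω ≤ 1)
    (δ : ℝ) (hδ0 : 0 < δ) (hδ1 : δ < 1) (K : ℕ) (hK : 1 ≤ K)
    (hdom : ∀ m < N, ∀ᵐ ω ∂P,
      |Y (m + 1) ω - Y m ω| ≤ ξ (m + 1) ω - ξ m ω ∧
      ξ (m + 1) ω - ξ m ω ≤ 1 / (K : ℝ) ^ 2)
    (hcond : ∀ m < N, ∀ᵐ ω ∂P,
      |(P[fun ω => Y (m + 1) ω - Y m ω|ℱ m]) ω| ≤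
        δ * (P[fun ω => ξ (m + 1) ω - ξ m ω|ℱ m]) ω) :
    ∫ ω, (⨆ m : Fin (N + 1), |Y m ω|) ∂P ≤ 2 / (K : ℝ) + δ := by
  have hK0 : (0 : ℝ) < K := by exact_mod_cast Nat.lt_of_lt_of_le Nat.zero_lt_one hK
  -- master a.e. facts on ξ, Y
  have hdom' : ∀ᵐ ω ∂P, ∀ m, m < N →
      |Y (m + 1) ω - Y m ω| ≤ ξ (m + 1) ω - ξ m ω ∧
      ξ (m + 1) ω - ξ m ω ≤ 1 / (K : ℝ) ^ 2 := by
    refine ae_all_iff.2 fun m => ?_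
    by_cases hm : m < N
    · filter_upwards [hdom m hm] with ω hω _; exact hω
    · exact Eventually.of_forall fun ω h => absurd h hm
  have hbounds : ∀ᵐ ω ∂P, ∀ m, m ≤ N → 0 ≤ ξ m ω ∧ ξ m ω ≤ 1 ∧ |Y m ω| ≤ ξ m ω := by
    filter_upwards [hξmono, hξN, hdom'] with ω h1 h2 h3
    exact ptwise (by rw [hξ0]; rfl) (by rw [hY0]; rfl) h1 h2 (fun m hm => (h3 m hm).1)
  -- the truncated process
  set Z : ℕ → Ω → ℝ := fun m => Y (min m N) with hZdef
  have hZad : StronglyAdapted ℱ Z :=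
    fun m => (hYadapted _ (min_le_right m N)).mono (ℱ.mono (min_le_left m N))
  have hZbdd : ∀ m, ∀ᵐ ω ∂P, |Z m ω| ≤ 1 := by
    intro m
    filter_upwards [hbounds] with ω hω
    obtain ⟨_, h2, h3⟩ := hω (min m N) (min_le_right m N)
    exact h3.trans h2
  have hZint : ∀ m, Integrable (Z m) P :=
    fun m => myInt ((hZad m).mono (ℱ.le m)).aestronglyMeasurable (hZbdd m)
  have hξint : ∀ m, m ≤ N → Integrable (ξ m) P := by
    intro m hm
    refine myInt ((hξadapted m hm).mono (ℱ.le m)).aestronglyMeasurable (C := 1) ?_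
    filter_upwards [hbounds] with ω hω
    obtain ⟨h1, h2, _⟩ := hω m hm
    rw [abs_of_nonneg h1]; exact h2
  have hZdiff : ∀ k, k < N → Z (k + 1) - Z k = (fun ω => Y (k + 1) ω - Y k ω) := by
    intro k hk
    ext ω
    simp [hZdef, min_eq_left (Nat.succ_le_of_lt hk), min_eq_left hk.le]
  have hZdiff0 : ∀ k, N ≤ k → Z (k + 1) - Z k = (0 : Ω → ℝ) := by
    intro k hk
    ext ω
    simp [hZdef, min_eq_right (hk.trans (Nat.le_succ k)), min_eq_right hk]
  have hc0 : ∀ k, N ≤ k → P[Z (k + 1) - Z k|ℱ k] = 0 := by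
    intro k hk; rw [hZdiff0 k hk]; exact condExp_zero
  have hcbdd : ∀ k, ∀ᵐ ω ∂P, |(P[Z (k + 1) - Z k|ℱ k]) ω| ≤ ((2 : ℝ≥0) : ℝ) := by
    intro k
    refine ae_bdd_condExp_of_ae_bdd ?_
    filter_upwards [hZbdd (k + 1), hZbdd k] with ω h1 h2
    calc |(Z (k + 1) - Z k) ω| ≤ |Z (k + 1) ω| + |Z k ω| := abs_sub _ _
    _ ≤ ((2 : ℝ≥0) : ℝ) := by push_cast; linarith
  -- the martingale part
  set M : ℕ → Ω → ℝ := martingalePart Z ℱ P with hMdef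
  have hM : Martingale M ℱ P := martingale_martingalePart hZad hZint
  have hMstep : ∀ n, N ≤ n → M (n + 1) = M n := by
    intro n hn
    ext ω
    simp only [hMdef, martingalePart, predictablePart, Finset.sum_range_succ, Pi.sub_apply,
      Pi.add_apply, Finset.sum_apply]
    have h1 : Z (n + 1) ω = Z n ω := by
      simp [hZdef, min_eq_right hn, min_eq_right (hn.trans (Nat.le_succ n))]
    have h2 : (P[Z (n + 1) - Z n|ℱ n]) ω = 0 := by rw [hc0 n hn]; rfl
    rw [h1, h2]
    ring
  have hMeqN : ∀ n, N ≤ n → M n = M N := by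
    intro n hn
    induction n with
    | zero => obtain rfl := Nat.le_zero.1 hn; rfl
    | succ k ih =>
      rcases Nat.lt_or_ge k N with h | h
      · obtain rfl : N = k + 1 := le_antisymm hn h
        rfl
      · rw [hMstep k h, ih h]
  have hMbddle : ∀ n, n ≤ N → ∀ᵐ ω ∂P, |M n ω| ≤ 1 + 2 * N := by
    intro n hn
    have hall : ∀ᵐ ω ∂P, ∀ k, |(P[Z (k + 1) - Z k|ℱ k]) ω| ≤ 2 := by
      refine ae_all_iff.2 fun k => ?_
      filter_upwards [hcbdd k] with ω hω
      exact le_trans hω (by norm_num)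
    filter_upwards [hZbdd n, hall] with ω h1 h2
    have h3 : |M n ω| ≤ |Z n ω| + ∑ i ∈ Finset.range n, |(P[Z (i + 1) - Z i|ℱ i]) ω| := by
      simp only [hMdef, martingalePart, predictablePart, Pi.sub_apply, Finset.sum_apply]
      exact (abs_sub _ _).trans (add_le_add_right (Finset.abs_sum_le_sum_abs _ _) _)
    have h4 : ∑ i ∈ Finset.range n, |(P[Z (i + 1) - Z i|ℱ i]) ω| ≤ ∑ i ∈ Finset.range n, 2 :=
      Finset.sum_le_sum fun i _ => h2 i
    have h5 : (∑ i ∈ Finset.range n, (2 : ℝ)) = 2 * n := by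
      rw [Finset.sum_const, Finset.card_range]; ring
    have h6 : (n : ℝ) ≤ N := by exact_mod_cast hn
    calc |M n ω| ≤ |Z n ω| + ∑ i ∈ Finset.range n, |(P[Z (i + 1) - Z i|ℱ i]) ω| := h3
    _ ≤ 1 + 2 * (n:ℝ) := by linarith
    _ ≤ 1 + 2 * N := by linarith
  have hMbdd : ∀ n, ∀ᵐ ω ∂P, |M n ω| ≤ 1 + 2 * N := by
    intro n
    rcases le_or_gt n N with h | h
    · exact hMbddle n h
    · rw [hMeqN n h.le]; exact hMbddle N le_rfl
  have hsubM : Submartingale (fun n ω => (M n ω) ^ 2) ℱ P :=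
    sq_submartingale hM (fun _ => 1 + 2 * N) hMbdd
  -- increments of the martingale part
  set e : ℕ → Ω → ℝ := fun k ω => (Z (k + 1) - Z k) ω - (P[Z (k + 1) - Z k|ℱ k]) ω with hedef
  have hemeas : ∀ k, StronglyMeasurable[ℱ (k + 1)] (e k) := by
    intro k
    have h1 : StronglyMeasurable[ℱ (k + 1)] (Z (k + 1) - Z k) :=
      (hZad (k + 1)).sub ((hZad k).mono (ℱ.mono k.le_succ))
    have h2 : StronglyMeasurable[ℱ (k + 1)] (P[Z (k + 1) - Z k|ℱ k]) :=
      stronglyMeasurable_condExp.mono (ℱ.mono k.le_succ)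
    exact h1.sub h2
  have hebdd : ∀ k, ∀ᵐ ω ∂P, |e k ω| ≤ 4 := by
    intro k
    filter_upwards [hZbdd (k + 1), hZbdd k, hcbdd k] with ω h1 h2 h3
    have h4 : |(Z (k + 1) - Z k) ω| ≤ 2 := by
      calc |(Z (k + 1) - Z k) ω| ≤ |Z (k + 1) ω| + |Z k ω| := abs_sub _ _
      _ ≤ 2 := by linarith
    have h3' : |(P[Z (k + 1) - Z k|ℱ k]) ω| ≤ 2 := by simpa using h3
    calc |e k ω| ≤ |(Z (k + 1) - Z k) ω| + |(P[Z (k + 1) - Z k|ℱ k]) ω| := abs_sub _ _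
    _ ≤ 4 := by linarith
  have hezero : ∀ k, P[e k|ℱ k] =ᵐ[P] 0 := by
    intro k
    have h1 : e k = (Z (k + 1) - Z k) - P[Z (k + 1) - Z k|ℱ k] := rfl
    rw [h1]
    have h2 : P[(Z (k + 1) - Z k) - P[Z (k + 1) - Z k|ℱ k]|ℱ k] =ᵐ[P]
        P[Z (k + 1) - Z k|ℱ k] - P[(P[Z (k + 1) - Z k|ℱ k] : Ω → ℝ)|ℱ k] :=
      condExp_sub ((hZint (k + 1)).sub (hZint k)) integrable_condExp _
    have h3 : P[(P[Z (k + 1) - Z k|ℱ k] : Ω → ℝ)|ℱ k] = P[Z (k + 1) - Z k|ℱ k] :=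
      condExp_of_stronglyMeasurable (ℱ.le k) stronglyMeasurable_condExp integrable_condExp
    filter_upwards [h2] with ω hω
    rw [hω]
    simp [h3]
  have hMNsum : ∀ ω, M N ω = ∑ i ∈ Finset.range N, e i ω := by
    intro ω
    have h0 : Z 0 ω = 0 := by simp [hZdef, min_eq_left (Nat.zero_le N), hY0]
    rw [hMdef, martingalePart_eq_sum]
    simp only [hedef, Pi.add_apply, Finset.sum_apply, Pi.sub_apply, h0, zero_add]
  have hσ2sum : ∫ ω, (M N ω) ^ 2 ∂P ≤ ∑ k ∈ Finset.range N, ∫ ω, (e k ω) ^ 2 ∂P := by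
    have h1 : ∫ ω, (M N ω) ^ 2 ∂P = ∫ ω, (∑ k ∈ Finset.range N, e k ω) ^ 2 ∂P :=
      integral_congr_ae (Eventually.of_forall fun ω => by simp only [hMNsum ω])
    rw [h1]
    exact variance_sum_le hemeas hebdd hezero N
  have hestep : ∀ k, k < N →
      ∫ ω, (e k ω) ^ 2 ∂P ≤ (1 / (K : ℝ) ^ 2) * ∫ ω, (ξ (k + 1) ω - ξ k ω) ∂P := by
    intro k hk
    have hD : AEStronglyMeasurable (Z (k + 1) - Z k) P :=
      (((hZad (k + 1)).sub ((hZad k).mono (ℱ.mono k.le_succ))).mono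
        (ℱ.le (k + 1))).aestronglyMeasurable
    have hDbdd : ∀ᵐ ω ∂P, |(Z (k + 1) - Z k) ω| ≤ 2 := by
      filter_upwards [hZbdd (k + 1), hZbdd k] with ω h1 h2
      calc |(Z (k + 1) - Z k) ω| ≤ |Z (k + 1) ω| + |Z k ω| := abs_sub _ _
      _ ≤ 2 := by linarith
    have h1 := centered_sq_le hD hDbdd (ℱ k) (ℱ.le k)
    have hint1 : Integrable (fun ω => ((Z (k + 1) - Z k) ω) ^ 2) P := by
      refine myInt ((hD.mul hD).congr
        (Eventually.of_forall fun ω => (pow_two ((Z (k + 1) - Z k) ω)).symm)) (C := 4) ?_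
      filter_upwards [hDbdd] with ω h2
      calc |((Z (k + 1) - Z k) ω) ^ 2| = |(Z (k + 1) - Z k) ω| * |(Z (k + 1) - Z k) ω| := by
            rw [pow_two, abs_mul]
      _ ≤ 4 := by nlinarith [abs_nonneg ((Z (k + 1) - Z k) ω)]
    have hint2 : Integrable (fun ω => (1 / (K : ℝ) ^ 2) * (ξ (k + 1) ω - ξ k ω)) P :=
      ((hξint (k + 1) hk).sub (hξint k hk.le)).const_mul _
    have h2 : ∫ ω, ((Z (k + 1) - Z k) ω) ^ 2 ∂P
        ≤ ∫ ω, (1 / (K : ℝ) ^ 2) * (ξ (k + 1) ω - ξ k ω) ∂P := by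
      refine integral_mono_ae hint1 hint2 ?_
      filter_upwards [hdom'] with ω hω
      obtain ⟨ha, hb⟩ := hω k hk
      have hZY : (Z (k + 1) - Z k) ω = Y (k + 1) ω - Y k ω := by rw [hZdiff k hk]
      rw [hZY]
      have habs : 0 ≤ |Y (k + 1) ω - Y k ω| := abs_nonneg _
      have h0 : 0 ≤ ξ (k + 1) ω - ξ k ω := le_trans habs ha
      calc (Y (k + 1) ω - Y k ω) ^ 2 = |Y (k + 1) ω - Y k ω| ^ 2 := (sq_abs _).symm
      _ ≤ (ξ (k + 1) ω - ξ k ω) ^ 2 := by nlinarith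
      _ ≤ (1 / (K : ℝ) ^ 2) * (ξ (k + 1) ω - ξ k ω) := by nlinarith
    calc ∫ ω, (e k ω) ^ 2 ∂P ≤ ∫ ω, ((Z (k + 1) - Z k) ω) ^ 2 ∂P := h1
    _ ≤ ∫ ω, (1 / (K : ℝ) ^ 2) * (ξ (k + 1) ω - ξ k ω) ∂P := h2
    _ = (1 / (K : ℝ) ^ 2) * ∫ ω, (ξ (k + 1) ω - ξ k ω) ∂P := integral_const_mul _ _
  have htel : ∑ k ∈ Finset.range N, ∫ ω, (ξ (k + 1) ω - ξ k ω) ∂P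
      = ∫ ω, ξ N ω ∂P - ∫ ω, ξ 0 ω ∂P := by
    have h1 : ∀ k ∈ Finset.range N, ∫ ω, (ξ (k + 1) ω - ξ k ω) ∂P
        = (∫ ω, ξ (k + 1) ω ∂P) - ∫ ω, ξ k ω ∂P := by
      intro k hk
      have hk' := Finset.mem_range.1 hk
      exact integral_sub (hξint (k + 1) hk') (hξint k hk'.le)
    rw [Finset.sum_congr rfl h1]
    exact Finset.sum_range_sub (fun k => ∫ ω, ξ k ω ∂P) N
  have hξ0int : ∫ ω, ξ 0 ω ∂P = 0 := by simp [hξ0]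
  have hξNle : ∫ ω, ξ N ω ∂P ≤ 1 := by
    calc ∫ ω, ξ N ω ∂P ≤ ∫ _, (1 : ℝ) ∂P :=
          integral_mono_ae (hξint N le_rfl) (integrable_const 1) hξN
    _ = 1 := by simp
  have hξNnn : 0 ≤ ∫ ω, ξ N ω ∂P :=
    integral_nonneg_of_ae (by filter_upwards [hbounds] with ω h using (h N le_rfl).1)
  have hσ2 : ∫ ω, (M N ω) ^ 2 ∂P ≤ 1 / (K : ℝ) ^ 2 := by
    have hKsq : (0:ℝ) < 1 / (K : ℝ) ^ 2 := by positivity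
    calc ∫ ω, (M N ω) ^ 2 ∂P ≤ ∑ k ∈ Finset.range N, ∫ ω, (e k ω) ^ 2 ∂P := hσ2sum
    _ ≤ ∑ k ∈ Finset.range N, (1 / (K : ℝ) ^ 2) * ∫ ω, (ξ (k + 1) ω - ξ k ω) ∂P :=
        Finset.sum_le_sum fun k hk => hestep k (Finset.mem_range.1 hk)
    _ = (1 / (K : ℝ) ^ 2) * ∑ k ∈ Finset.range N, ∫ ω, (ξ (k + 1) ω - ξ k ω) ∂P :=
        (Finset.mul_sum _ _ _).symm
    _ ≤ 1 / (K : ℝ) ^ 2 := by rw [htel, hξ0int]; nlinarith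
  -- the maximal function
  set G : Ω → ℝ := fun ω => (Finset.range (N + 1)).sup' nonempty_range_add_one
    (fun k => |M k ω|) with hGdef
  have hGbound : ∫ ω, G ω ∂P ≤ 2 / (K : ℝ) := by
    have ha : (0:ℝ) < 1 / (K : ℝ) := by positivity
    have h1 : ∫ ω, G ω ∂P ≤ 1 / (K : ℝ) + (∫ ω, (M N ω) ^ 2 ∂P) / (1 / (K : ℝ)) :=
      max_abs_le hM hsubM N ha (1 + 2 * N) hMbdd
    have h2 : (∫ ω, (M N ω) ^ 2 ∂P) / (1 / (K : ℝ)) = (K : ℝ) * ∫ ω, (M N ω) ^ 2 ∂P := by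
      rw [one_div]; field_simp
    have h3 : (K : ℝ) * ∫ ω, (M N ω) ^ 2 ∂P ≤ (K : ℝ) * (1 / (K : ℝ) ^ 2) :=
      mul_le_mul_of_nonneg_left hσ2 hK0.le
    have h4 : (K : ℝ) * (1 / (K : ℝ) ^ 2) = 1 / (K : ℝ) := by
      field_simp
    have h5 : 2 / (K : ℝ) = 1 / (K : ℝ) + 1 / (K : ℝ) := by ring
    rw [h2] at h1
    linarith
  have hGnn : ∀ ω, 0 ≤ G ω := fun ω =>
    le_trans (abs_nonneg (M 0 ω)) (Finset.le_sup' (fun k => |M k ω|)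
      (Finset.mem_range.mpr (Nat.succ_pos N)))
  have hGint : Integrable G P := by
    refine myInt (C := 1 + 2 * N) (Measurable.aestronglyMeasurable ?_) ?_
    · exact Finset.measurable_range_sup'' fun k _ =>
        ((hM.stronglyAdapted k).mono (ℱ.le k)).measurable.abs
    · have h : ∀ᵐ ω ∂P, ∀ k, |M k ω| ≤ 1 + 2 * N := ae_all_iff.2 hMbdd
      filter_upwards [h] with ω hω
      rw [abs_of_nonneg (hGnn ω)]
      exact Finset.sup'_le _ _ fun k _ => hω k
  -- the predictable bound
  set T : Ω → ℝ := fun ω => ∑ k ∈ Finset.range N,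
    (P[fun ω' => ξ (k + 1) ω' - ξ k ω'|ℱ k]) ω with hTdef
  have hTint : Integrable T P :=
    integrable_finset_sum _ fun i _ => integrable_condExp
  have hTle : ∫ ω, T ω ∂P ≤ 1 := by
    have hTval : ∫ ω, T ω ∂P = ∫ ω, ξ N ω ∂P - ∫ ω, ξ 0 ω ∂P := by
      rw [hTdef, integral_finset_sum _ (fun i _ => integrable_condExp)]
      have h : ∀ k ∈ Finset.range N, ∫ ω, (P[fun ω' => ξ (k + 1) ω' - ξ k ω'|ℱ k]) ω ∂P
          = ∫ ω, (ξ (k + 1) ω - ξ k ω) ∂P := fun k _ => integral_condExp (ℱ.le k)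
      rw [Finset.sum_congr rfl h, htel]
    rw [hTval, hξ0int]
    linarith
  have haecond : ∀ᵐ ω ∂P, ∀ k, k < N →
      |(P[Z (k + 1) - Z k|ℱ k]) ω| ≤ δ * (P[fun ω' => ξ (k + 1) ω' - ξ k ω'|ℱ k]) ω := by
    refine ae_all_iff.2 fun k => ?_
    by_cases hk : k < N
    · have h1 : P[Z (k + 1) - Z k|ℱ k] = P[fun ω' => Y (k + 1) ω' - Y k ω'|ℱ k] := by
        rw [hZdiff k hk]
      filter_upwards [hcond k hk] with ω hω _
      rw [h1]
      exact hω
    · exact Eventually.of_forall fun ω h => absurd h hk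
  have hdnn : ∀ᵐ ω ∂P, ∀ k, k < N →
      0 ≤ (P[fun ω' => ξ (k + 1) ω' - ξ k ω'|ℱ k]) ω := by
    refine ae_all_iff.2 fun k => ?_
    by_cases hk : k < N
    · have h1 : (0 : Ω → ℝ) ≤ᵐ[P] P[fun ω' => ξ (k + 1) ω' - ξ k ω'|ℱ k] :=
        condExp_nonneg (by
          filter_upwards [hξmono] with ω hω
          simpa using sub_nonneg.2 (hω k hk))
      filter_upwards [h1] with ω hω _
      simpa using hω
    · exact Eventually.of_forall fun ω h => absurd h hk
  have hsup : ∀ᵐ ω ∂P, (⨆ m : Fin (N + 1), |Y m ω|) ≤ G ω + δ * T ω := by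
    filter_upwards [haecond, hdnn] with ω h1 h2
    refine ciSup_le fun m => ?_
    have hm : (m : ℕ) ≤ N := Nat.lt_succ_iff.1 m.2
    have hYZ : Y (m : ℕ) ω = Z (m : ℕ) ω := by simp [hZdef, min_eq_left hm]
    have hZMA : Z (m : ℕ) ω = M (m : ℕ) ω + predictablePart Z ℱ P (m : ℕ) ω := by
      have h3 := congrFun (congrFun (martingalePart_add_predictablePart ℱ P Z) (m : ℕ)) ω
      simpa [hMdef] using h3.symm
    have hA : |predictablePart Z ℱ P (m : ℕ) ω| ≤ δ * T ω := by
      have hAsum : predictablePart Z ℱ P (m : ℕ) ω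
          = ∑ i ∈ Finset.range (m : ℕ), (P[Z (i + 1) - Z i|ℱ i]) ω := by
        simp [predictablePart, Finset.sum_apply]
      rw [hAsum]
      calc |∑ i ∈ Finset.range (m : ℕ), (P[Z (i + 1) - Z i|ℱ i]) ω|
          ≤ ∑ i ∈ Finset.range (m : ℕ), |(P[Z (i + 1) - Z i|ℱ i]) ω| :=
            Finset.abs_sum_le_sum_abs _ _
      _ ≤ ∑ i ∈ Finset.range (m : ℕ), δ * (P[fun ω' => ξ (i + 1) ω' - ξ i ω'|ℱ i]) ω :=
            Finset.sum_le_sum fun i hi =>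
              h1 i (lt_of_lt_of_le (Finset.mem_range.1 hi) hm)
      _ ≤ ∑ i ∈ Finset.range N, δ * (P[fun ω' => ξ (i + 1) ω' - ξ i ω'|ℱ i]) ω :=
            Finset.sum_le_sum_of_subset_of_nonneg (Finset.range_subset_range.2 hm)
              fun i hi _ => mul_nonneg hδ0.le (h2 i (Finset.mem_range.1 hi))
      _ = δ * T ω := by rw [hTdef]; rw [Finset.mul_sum]
    have hMG : |M (m : ℕ) ω| ≤ G ω :=
      Finset.le_sup' (fun k => |M k ω|) (Finset.mem_range.mpr m.2)
    calc |Y (m : ℕ) ω| = |M (m : ℕ) ω + predictablePart Z ℱ P (m : ℕ) ω| := by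
          rw [hYZ, hZMA]
    _ ≤ |M (m : ℕ) ω| + |predictablePart Z ℱ P (m : ℕ) ω| := abs_add_le _ _
    _ ≤ G ω + δ * T ω := add_le_add hMG hA
  have hRS : Integrable (fun ω => G ω + δ * T ω) P := hGint.add (hTint.const_mul δ)
  have hfinal : ∫ ω, (⨆ m : Fin (N + 1), |Y m ω|) ∂P ≤ ∫ ω, (G ω + δ * T ω) ∂P := by
    refine integral_mono_of_nonneg ?_ hRS hsup
    exact Eventually.of_forall fun ω => Real.iSup_nonneg fun m => abs_nonneg _
  have hsplit : ∫ ω, (G ω + δ * T ω) ∂P = ∫ ω, G ω ∂P + δ * ∫ ω, T ω ∂P := by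
    have hδT : Integrable (fun ω => δ * T ω) P := hTint.const_mul δ
    rw [integral_add hGint hδT, integral_const_mul]
  have hδTle : δ * ∫ ω, T ω ∂P ≤ δ := by
    calc δ * ∫ ω, T ω ∂P ≤ δ * 1 := mul_le_mul_of_nonneg_left hTle hδ0.le
    _ = δ := mul_one δ
  calc ∫ ω, (⨆ m : Fin (N + 1), |Y m ω|) ∂P ≤ ∫ ω, (G ω + δ * T ω) ∂P := hfinal
  _ = ∫ ω, G ω ∂P + δ * ∫ ω, T ω ∂P := hsplit
  _ ≤ 2 / (K : ℝ) + δ := add_le_add hGbound hδTle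
end

section
/- Let π be a frozen percolation type flow with initial kernel a kernel κ and critical time t_c. Then for every t ≥ t_c one has t·‖π(t)‖₁ ≤ 1. -/
open Matrix

noncomputable def l1norm {k : ℕ} (v : Fin k → ℝ) : ℝ := ∑ i, |v i|

noncomputable def kernelAt {k : ℕ} (κ : Matrix (Fin k) (Fin k) ℝ) (t : ℝ) :
    Matrix (Fin k) (Fin k) ℝ :=
  κ + t • Matrix.of (fun _ _ => (1 : ℝ))

structure IsTypeFlow {k : ℕ} (κ : Matrix (Fin k) (Fin k) ℝ) (π : ℝ → Fin k → ℝ)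
    (tc : ℝ) (φ : ℝ → ℝ) : Prop where
  nonneg : ∀ t ≥ (0 : ℝ), ∀ i, 0 ≤ π t i
  ne_zero : ∀ t ≥ (0 : ℝ), π t ≠ 0
  cont : ContinuousOn π (Set.Ici 0)
  tc_nonneg : 0 ≤ tc
  phi_pos : ∀ t > tc, 0 < φ t
  phi_cont : ContinuousOn φ (Set.Ioi tc)
  init : ∀ t, 0 ≤ t → t ≤ tc → π t = π 0
  crit : ∀ t ≥ tc, perronRoot (circ (kernelAt κ t) (π t)) = 1
  flowDE : ∀ t > tc, ∃ μ : Fin k → ℝ,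
      (∀ i, 0 < μ i) ∧ l1norm μ = 1 ∧
      Matrix.vecMul μ (circ (kernelAt κ t) (π t)) = μ ∧
      HasDerivAt π (-(φ t) • μ) t

/-- Equation (6.2) (upbdPhi): after the critical time, Φ(t) = ‖π(t)‖₁ ≤ 1/t. -/
theorem type_flow_total_mass_bound
    {k : ℕ} (hk : 0 < k) (κ : Matrix (Fin k) (Fin k) ℝ) (hκ : IsKernel κ)
    (π : ℝ → Fin k → ℝ) (tc : ℝ) (φ : ℝ → ℝ) (hπ : IsTypeFlow κ π tc φ) :
    ∀ t ≥ tc, t * l1norm (π t) ≤ 1 := by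
  have key : ∀ t > tc, t * l1norm (π t) ≤ 1 := by
    intro t ht
    have ht0 : (0:ℝ) ≤ t := le_of_lt (lt_of_le_of_lt hπ.tc_nonneg ht)
    obtain ⟨μ, hμpos, hμ1, hμeig, -⟩ := hπ.flowDE t ht
    have hπnn : ∀ i, 0 ≤ π t i := hπ.nonneg t ht0
    have hsum : ∑ i, μ i = 1 := by
      rw [← hμ1]; unfold l1norm
      exact Finset.sum_congr rfl fun i _ => (abs_of_pos (hμpos i)).symm
    have hbound : ∀ j, t * π t j ≤ μ j := by
      intro j
      have h := congrFun hμeig j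
      have heq : μ j = ∑ i, μ i * ((κ i j + t) * π t j) := by
        rw [← h]
        simp [Matrix.vecMul, dotProduct, circ, kernelAt, Matrix.add_apply,
          Matrix.smul_apply]
      rw [heq]
      calc t * π t j = ∑ i, μ i * (t * π t j) := by
            rw [← Finset.sum_mul, hsum, one_mul]
        _ ≤ ∑ i, μ i * ((κ i j + t) * π t j) := by
            refine Finset.sum_le_sum fun i _ => ?_
            refine mul_le_mul_of_nonneg_left ?_ (le_of_lt (hμpos i))
            refine mul_le_mul_of_nonneg_right ?_ (hπnn j)
            linarith [hκ.2 i j]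
    calc t * l1norm (π t) = ∑ j, t * π t j := by
          unfold l1norm
          rw [Finset.mul_sum]
          exact Finset.sum_congr rfl fun j _ => by rw [abs_of_nonneg (hπnn j)]
      _ ≤ ∑ j, μ j := Finset.sum_le_sum fun j _ => hbound j
      _ = 1 := hsum
  intro t ht
  rcases ht.eq_or_lt with h | h
  · subst h
    have hc : ContinuousWithinAt (fun s => s * l1norm (π s)) (Set.Ioi tc) tc := by
      have h1 : ContinuousOn (fun s => s * l1norm (π s)) (Set.Ici 0) := by
        refine ContinuousOn.mul continuousOn_id ?_
        unfold l1norm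
        refine continuousOn_finset_sum _ fun i _ => ?_
        exact ((continuous_apply i).comp_continuousOn hπ.cont).abs
      exact (h1 tc hπ.tc_nonneg).mono fun x hx =>
        le_of_lt (lt_of_le_of_lt hπ.tc_nonneg hx)
    refine le_of_tendsto hc ?_
    filter_upwards [self_mem_nhdsWithin] with s hs
    exact key s hs
  · exact key t h
end

section
/- Let κ be a kernel and let π(0) ∈ ℝ^k have strictly positive entries with ‖π(0)‖₁ = 1, and assume that at least one of the following holds: (a) κ has strictly positive entries and ρ(κ∘π(0)) ≤ 1; or (b) ρ(κ∘π(0)) < 1. Let π be the frozen percolation type flow with initial kernel κ and initial value π(0), with critical time t_c, and write κ_max = max_{i,j∈[k]} κ_{i,j}. Then for every i ∈ [k] and every T ≥ max(1, t_c): π_i(T) ≥ π_i(0)·e^{−(κ_max+1)}/T, and consequently π_i(T)/‖π(T)‖₁ ≥ π_i(0)·e^{−(κ_max+1)}. -/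
open Matrix

/-- Lower bound (6.4) (lowbdpiT): an explicit lower bound on each component of the
frozen percolation type flow, and on its normalised version. -/
theorem type_flow_component_lower_bound
    {k : ℕ} (hk : 0 < k) (κ : Matrix (Fin k) (Fin k) ℝ) (hκ : IsKernel κ)
    (π0 : Fin k → ℝ) (hπ0pos : ∀ i, 0 < π0 i) (hπ0sum : l1norm π0 = 1)
    (hcase : ((∀ i j, 0 < κ i j) ∧ perronRoot (circ κ π0) ≤ 1) ∨
      perronRoot (circ κ π0) < 1)
    (π : ℝ → Fin k → ℝ) (tc : ℝ) (φ : ℝ → ℝ)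
    (hπ : IsTypeFlow κ π tc φ) (hπinit : π 0 = π0) :
    ∀ i, ∀ T : ℝ, max 1 tc ≤ T →
      π0 i * Real.exp (-((⨆ i, ⨆ j, κ i j) + 1)) / T ≤ π T i ∧
      π0 i * Real.exp (-((⨆ i, ⨆ j, κ i j) + 1)) ≤ π T i / l1norm (π T) := by
  obtain ⟨hsym, hκnn⟩ := hκ
  haveI hne : Nonempty (Fin k) := ⟨⟨0, hk⟩⟩
  intro j T hT
  set κm : ℝ := ⨆ i, ⨆ j, κ i j with hκmdef
  have hbdd : ∀ i j', κ i j' ≤ κm := by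
    intro i j'
    calc κ i j' ≤ ⨆ j', κ i j' :=
          le_ciSup (Set.Finite.bddAbove (Set.finite_range _)) j'
      _ ≤ κm := le_ciSup (f := fun i => ⨆ j', κ i j')
          (Set.Finite.bddAbove (Set.finite_range _)) i
  have hκm0 : (0:ℝ) ≤ κm := le_trans (hκnn ⟨0, hk⟩ ⟨0, hk⟩) (hbdd _ _)
  set S : ℝ → ℝ := fun t => ∑ i, π t i with hSdef
  have h0tc : (0:ℝ) ≤ tc := hπ.tc_nonneg
  have hT1 : (1:ℝ) ≤ T := le_trans (le_max_left _ _) hT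
  have hTtc : tc ≤ T := le_trans (le_max_right _ _) hT
  have hTpos : (0:ℝ) < T := lt_of_lt_of_le one_pos hT1
  -- the eigenvector family
  have hDE := hπ.flowDE
  set μ : ℝ → Fin k → ℝ := fun t => if h : tc < t then (hDE t h).choose else 0 with hμdef
  have hμspec : ∀ t, ∀ h : tc < t, (∀ i, 0 < μ t i) ∧ l1norm (μ t) = 1 ∧
      Matrix.vecMul (μ t) (circ (kernelAt κ t) (π t)) = μ t ∧
      HasDerivAt π (-(φ t) • μ t) t := by
    intro t h
    simp only [hμdef, dif_pos h]
    exact (hDE t h).choose_spec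
  have hμsum : ∀ t, tc < t → ∑ i, μ t i = 1 := by
    intro t h
    have h1 := (hμspec t h).2.1
    rw [l1norm] at h1
    rw [← h1]
    exact Finset.sum_congr rfl fun i _ => (abs_of_pos ((hμspec t h).1 i)).symm
  have hcirc : ∀ t (l i : Fin k), circ (kernelAt κ t) (π t) l i = (κ l i + t) * π t i := by
    intro t l i
    simp [circ, kernelAt, Matrix.add_apply, Matrix.smul_apply, smul_eq_mul]
  have hev : ∀ t, tc < t → ∀ i, (∑ l, μ t l * ((κ l i + t) * π t i)) = μ t i := by
    intro t ht i
    have h3 := congrFun ((hμspec t ht).2.2.1) i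
    simpa [Matrix.vecMul, dotProduct, hcirc] using h3
  have hπpos : ∀ t, tc < t → ∀ i, 0 < π t i := by
    intro t ht i
    rcases eq_or_lt_of_le (hπ.nonneg t (h0tc.trans ht.le) i) with h0 | h
    · exfalso
      have h1 := hev t ht i
      rw [← h0] at h1
      simp only [mul_zero, Finset.sum_const_zero] at h1
      exact ((hμspec t ht).1 i).ne' h1.symm
    · exact h
  have hub : ∀ t, tc < t → ∀ i, μ t i ≤ (κm + t) * π t i := by
    intro t ht i
    rw [← hev t ht i]
    calc ∑ l, μ t l * ((κ l i + t) * π t i)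
        ≤ ∑ l, μ t l * ((κm + t) * π t i) := by
          apply Finset.sum_le_sum
          intro l _
          exact mul_le_mul_of_nonneg_left (mul_le_mul_of_nonneg_right
            (by linarith [hbdd l i]) (hπpos t ht i).le) ((hμspec t ht).1 l).le
      _ = (∑ l, μ t l) * ((κm + t) * π t i) := by rw [Finset.sum_mul]
      _ = (κm + t) * π t i := by rw [hμsum t ht, one_mul]
  have hlb : ∀ t, tc < t → ∀ i, t * π t i ≤ μ t i := by
    intro t ht i
    rw [← hev t ht i]
    calc t * π t i = (∑ l, μ t l) * (t * π t i) := by rw [hμsum t ht, one_mul]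
      _ = ∑ l, μ t l * (t * π t i) := by rw [Finset.sum_mul]
      _ ≤ ∑ l, μ t l * ((κ l i + t) * π t i) := by
          apply Finset.sum_le_sum
          intro l _
          exact mul_le_mul_of_nonneg_left (mul_le_mul_of_nonneg_right
            (by linarith [hκnn l i]) (hπpos t ht i).le) ((hμspec t ht).1 l).le
  have htS0 : ∀ t, tc < t → t * S t ≤ 1 := by
    intro t ht
    have h1 : ∑ i, t * π t i ≤ ∑ i, μ t i := Finset.sum_le_sum fun i _ => hlb t ht i
    rw [hμsum t ht] at h1
    calc t * S t = ∑ i, t * π t i := by rw [hSdef]; exact Finset.mul_sum _ _ _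
      _ ≤ 1 := h1
  -- derivatives
  have hder : ∀ t, tc < t → ∀ i, HasDerivAt (fun s => π s i) (-(φ t) * μ t i) t := by
    intro t ht i
    have h1 := hasDerivAt_pi.1 ((hμspec t ht).2.2.2) i
    simpa [Pi.smul_apply, smul_eq_mul] using h1
  have hSder : ∀ t, tc < t → HasDerivAt S (-(φ t)) t := by
    intro t ht
    have h1 : HasDerivAt (fun s => ∑ i, π s i) (∑ i, -(φ t) * μ t i) t :=
      HasDerivAt.fun_sum fun i _ => hder t ht i
    have h2 : (∑ i, -(φ t) * μ t i) = -(φ t) := by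
      rw [← Finset.mul_sum, hμsum t ht, mul_one]
    rw [h2] at h1
    exact h1
  -- continuity
  have hcontj : ∀ i, ContinuousOn (fun s => π s i) (Set.Ici (0:ℝ)) :=
    fun i => (continuous_apply i).comp_continuousOn hπ.cont
  have hScont : ContinuousOn S (Set.Ici (0:ℝ)) := by
    apply continuousOn_finset_sum
    intro i _
    exact hcontj i
  -- initial values
  have hπtc : π tc = π0 := by rw [hπ.init tc h0tc le_rfl, hπinit]
  have hStc : S tc = 1 := by
    rw [hSdef]
    simp only [hπtc]
    rw [← hπ0sum, l1norm]
    exact Finset.sum_congr rfl fun i _ => (abs_of_pos (hπ0pos i)).symm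
  -- t * S t ≤ 1 on [tc, ∞) by continuity
  have hIoiIci : ∀ t : ℝ, tc ≤ t → Set.Ioi t ⊆ Set.Ici (0:ℝ) :=
    fun t ht x hx => le_of_lt (lt_of_le_of_lt (h0tc.trans ht) hx)
  have htS : ∀ t, tc ≤ t → t * S t ≤ 1 := by
    intro t ht
    have hcw : ContinuousWithinAt (fun s => s * S s) (Set.Ioi t) t := by
      apply ContinuousWithinAt.mul continuousWithinAt_id
      exact (hScont t (Set.mem_Ici.2 (h0tc.trans ht))).mono (hIoiIci t ht)
    exact le_of_tendsto hcw
      (eventually_nhdsWithin_of_forall fun s hs => htS0 s (lt_of_le_of_lt ht hs))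
  have htc1 : tc ≤ 1 := by
    have h1 := htS tc le_rfl
    rw [hStc, mul_one] at h1
    exact h1
  -- S is ≤ 1 on [tc, ∞)
  have hSanti : AntitoneOn S (Set.Ici tc) := by
    apply antitoneOn_of_deriv_nonpos (convex_Ici tc)
      (hScont.mono fun x hx => le_trans h0tc hx)
    · intro t ht
      rw [interior_Ici] at ht
      exact (hSder t ht).differentiableAt.differentiableWithinAt
    · intro t ht
      rw [interior_Ici] at ht
      rw [(hSder t ht).deriv]
      exact neg_nonpos.2 (hπ.phi_pos t ht).le
  have hSle1 : ∀ t, tc ≤ t → S t ≤ 1 := by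
    intro t ht
    have := hSanti (Set.mem_Ici.2 le_rfl) (Set.mem_Ici.2 ht) ht
    rw [hStc] at this
    exact this
  have hπposge : ∀ t, tc ≤ t → ∀ i, 0 < π t i := by
    intro t ht i
    rcases eq_or_lt_of_le ht with h | h
    · rw [← h, hπtc]; exact hπ0pos i
    · exact hπpos t h i
  have hSpos : ∀ t, tc ≤ t → 0 < S t := by
    intro t ht
    exact Finset.sum_pos (fun i _ => hπposge t ht i) Finset.univ_nonempty
  -- the two auxiliary monotone functions
  set G1 : ℝ → ℝ := fun t => Real.log (π t j) - (κm + t) * S t + t with hG1def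
  set G2 : ℝ → ℝ := fun t => Real.log (π t j) - (κm + t) * S t + Real.log t with hG2def
  have hbase : ∀ t, tc < t → HasDerivAt (fun s => Real.log (π s j) - (κm + s) * S s)
      (-(φ t) * μ t j / π t j - (1 * S t + (κm + t) * -(φ t))) t := by
    intro t ht
    exact ((hder t ht j).log (hπpos t ht j).ne').sub
      (((hasDerivAt_id t).const_add κm).mul (hSder t ht))
  have hcontbase : ∀ a, tc ≤ a → ContinuousOn (fun s => Real.log (π s j) - (κm + s) * S s)
      (Set.Icc a T) := by
    intro a ha
    have hsub : Set.Icc a T ⊆ Set.Ici (0:ℝ) := fun x hx => le_trans (h0tc.trans ha) hx.1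
    apply ContinuousOn.sub
    · exact ((hcontj j).mono hsub).log fun t htm => (hπposge t (ha.trans htm.1) j).ne'
    · exact (continuousOn_const.add continuousOn_id).mul (hScont.mono hsub)
  have hmono1 : MonotoneOn G1 (Set.Icc tc 1) := by
    apply monotoneOn_of_deriv_nonneg (convex_Icc tc 1)
    · exact ((hcontbase tc le_rfl).mono (Set.Icc_subset_Icc le_rfl hT1)).add continuousOn_id
    · intro t ht
      rw [interior_Icc] at ht
      exact (((hbase t ht.1).add (hasDerivAt_id t)).differentiableAt).differentiableWithinAt
    · intro t ht
      rw [interior_Icc] at ht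
      have hd : HasDerivAt G1 (-(φ t) * μ t j / π t j - (1 * S t + (κm + t) * -(φ t)) + 1) t :=
        (hbase t ht.1).add (hasDerivAt_id' t)
      rw [hd.deriv]
      have hp := hπpos t ht.1 j
      have hq : μ t j / π t j ≤ κm + t := (div_le_iff₀ hp).2 (by linarith [hub t ht.1 j])
      have hφ := (hπ.phi_pos t ht.1).le
      have h2 : φ t * (μ t j / π t j) ≤ φ t * (κm + t) := mul_le_mul_of_nonneg_left hq hφ
      have h3 : S t ≤ 1 := hSle1 t ht.1.le
      have h4 : -(φ t) * μ t j / π t j = -(φ t * (μ t j / π t j)) := by ring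
      rw [h4]
      linarith
  have hmono2 : MonotoneOn G2 (Set.Icc 1 T) := by
    apply monotoneOn_of_deriv_nonneg (convex_Icc 1 T)
    · apply ContinuousOn.add (hcontbase 1 htc1)
      exact continuousOn_id.log fun t htm => (lt_of_lt_of_le one_pos htm.1).ne'
    · intro t ht
      rw [interior_Icc] at ht
      have htc' : tc < t := lt_of_le_of_lt htc1 ht.1
      exact (((hbase t htc').add (Real.hasDerivAt_log
        (lt_trans one_pos ht.1).ne')).differentiableAt).differentiableWithinAt
    · intro t ht
      rw [interior_Icc] at ht
      have htc' : tc < t := lt_of_le_of_lt htc1 ht.1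
      have ht0 : (0:ℝ) < t := lt_trans one_pos ht.1
      have hd : HasDerivAt G2 (-(φ t) * μ t j / π t j - (1 * S t + (κm + t) * -(φ t)) + t⁻¹) t :=
        (hbase t htc').add (Real.hasDerivAt_log ht0.ne')
      rw [hd.deriv]
      have hp := hπpos t htc' j
      have hq : μ t j / π t j ≤ κm + t := (div_le_iff₀ hp).2 (by linarith [hub t htc' j])
      have hφ := (hπ.phi_pos t htc').le
      have h2 : φ t * (μ t j / π t j) ≤ φ t * (κm + t) := mul_le_mul_of_nonneg_left hq hφ
      have h3 : S t ≤ 1 / t := by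
        rw [le_div_iff₀ ht0]
        have := htS t htc'.le
        linarith [this]
      have h4 : -(φ t) * μ t j / π t j = -(φ t * (μ t j / π t j)) := by ring
      rw [h4]
      linarith [one_div t]
  -- combine
  have hA : G1 tc ≤ G1 1 :=
    hmono1 (Set.mem_Icc.2 ⟨le_rfl, htc1⟩) (Set.mem_Icc.2 ⟨htc1, le_rfl⟩) htc1
  have hB : G2 1 ≤ G2 T :=
    hmono2 (Set.mem_Icc.2 ⟨le_rfl, hT1⟩) (Set.mem_Icc.2 ⟨hT1, le_rfl⟩) hT1
  have hG1tc : G1 tc = Real.log (π0 j) - κm := by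
    rw [hG1def]
    simp only [hπtc, hStc]
    ring
  have hG21 : G2 1 = G1 1 - 1 := by
    rw [hG2def, hG1def]
    simp only [Real.log_one]
    ring
  have hSTnn : 0 ≤ (κm + T) * S T :=
    mul_nonneg (by linarith) (hSpos T hTtc).le
  have hlog : Real.log (π0 j) - (κm + 1) - Real.log T ≤ Real.log (π T j) := by
    have h1 : Real.log (π T j) - (κm + T) * S T + Real.log T = G2 T := by rw [hG2def]
    have h2 : Real.log (π0 j) - κm - 1 ≤ G2 T := by
      rw [← hG1tc]
      linarith [hA, hB, hG21]
    rw [← h1] at h2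
    linarith
  have hgoal1 : π0 j * Real.exp (-(κm + 1)) / T ≤ π T j := by
    calc π0 j * Real.exp (-(κm + 1)) / T
        = Real.exp (Real.log (π0 j) - (κm + 1) - Real.log T) := by
          rw [Real.exp_sub, Real.exp_sub, Real.exp_log (hπ0pos j), Real.exp_log hTpos, Real.exp_neg]
          ring
      _ ≤ Real.exp (Real.log (π T j)) := Real.exp_le_exp.mpr hlog
      _ = π T j := Real.exp_log (hπposge T hTtc j)
  refine ⟨hgoal1, ?_⟩
  have hl1 : l1norm (π T) = S T := by
    rw [l1norm, hSdef]
    exact Finset.sum_congr rfl fun i _ => abs_of_nonneg (hπ.nonneg T (le_trans h0tc hTtc) i)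
  rw [hl1]
  have hST := hSpos T hTtc
  rw [le_div_iff₀ hST]
  have h5 : π0 j * Real.exp (-(κm + 1)) ≤ π T j * T := (div_le_iff₀ hTpos).1 hgoal1
  have h6 := htS T hTtc
  nlinarith [(hπposge T hTtc j).le, Real.exp_pos (-(κm + 1)), (hπ0pos j).le]
end

section
/- For all real numbers 0 < η < T < ∞ there exists a constant c < 1 such that: for every symmetric k×k real matrix A with all entries in [η,T], every eigenvalue λ of A other than the largest eigenvalue λ_max(A) satisfies |λ| ≤ c·λ_max(A). -/
open Matrix

namespace UniformSpectralGap

variable {k : ℕ}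

lemma spec_eigvec {A : Matrix (Fin k) (Fin k) ℝ} {lam : ℝ}
    (h : lam ∈ spectrum ℝ A) : ∃ v : Fin k → ℝ, v ≠ 0 ∧ A *ᵥ v = lam • v := by
  rw [← AlgEquiv.spectrum_eq (Matrix.toLinAlgEquiv' : Matrix (Fin k) (Fin k) ℝ ≃ₐ[ℝ] _) A,
      ← Module.End.hasEigenvalue_iff_mem_spectrum] at h
  obtain ⟨v, hv1, hv2⟩ := h.exists_hasEigenvector
  refine ⟨v, hv2, ?_⟩
  have := Module.End.mem_eigenspace_iff.mp hv1
  simpa [Matrix.toLinAlgEquiv'_apply] using this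

lemma quad_expand (A : Matrix (Fin k) (Fin k) ℝ) (v w : Fin k → ℝ) :
    v ⬝ᵥ (A *ᵥ w) = ∑ i, ∑ j, v i * (A i j * w j) := by
  simp [dotProduct, mulVec, Finset.mul_sum]

lemma dot_self_pos {v : Fin k → ℝ} (hv : v ≠ 0) : 0 < v ⬝ᵥ v := by
  have h0 : 0 ≤ v ⬝ᵥ v := Finset.sum_nonneg fun i _ => mul_self_nonneg _
  rcases h0.lt_or_eq with h | h
  · exact h
  · exact absurd (dotProduct_self_eq_zero.mp h.symm) hv

lemma sSup_spectrum_spec (hk : 0 < k) {A : Matrix (Fin k) (Fin k) ℝ}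
    (hA : A.IsHermitian) :
    ∃ μ : ℝ, sSup (spectrum ℝ A) = μ ∧ μ ∈ spectrum ℝ A ∧
      (∀ v : Fin k → ℝ, v ⬝ᵥ (A *ᵥ v) ≤ μ * (v ⬝ᵥ v)) ∧
      (∀ v : Fin k → ℝ, v ⬝ᵥ (A *ᵥ v) = μ * (v ⬝ᵥ v) → A *ᵥ v = μ • v) := by
  haveI : Nonempty (Fin k) := ⟨⟨0, hk⟩⟩
  obtain ⟨i0, -, hi0⟩ := Finset.exists_max_image Finset.univ hA.eigenvalues
    ⟨Classical.arbitrary (Fin k), Finset.mem_univ _⟩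
  set μ := hA.eigenvalues i0 with hμdef
  have hi0' : ∀ i, hA.eigenvalues i ≤ μ := fun i => hi0 i (Finset.mem_univ i)
  set U : Matrix (Fin k) (Fin k) ℝ := (hA.eigenvectorUnitary : Matrix (Fin k) (Fin k) ℝ) with hU
  have hstar : star U = Uᵀ := by
    rw [Matrix.star_eq_conjTranspose, Matrix.conjTranspose_eq_transpose_of_trivial]
  have hUU : U * Uᵀ = 1 := by
    rw [← hstar]; exact (Matrix.mem_unitaryGroup_iff).mp hA.eigenvectorUnitary.2
  have hspec : A = U * Matrix.diagonal hA.eigenvalues * Uᵀ := by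
    have := hA.spectral_theorem
    rw [Unitary.conjStarAlgAut_apply, ← hU, hstar] at this
    simpa [RCLike.ofReal_real_eq_id] using this
  -- key quadratic form computations
  have hAv : ∀ v : Fin k → ℝ,
      A *ᵥ v = U *ᵥ (fun i => hA.eigenvalues i * (Uᵀ *ᵥ v) i) := by
    intro v
    conv_lhs => rw [hspec]
    rw [← Matrix.mulVec_mulVec, ← Matrix.mulVec_mulVec,
      show Matrix.diagonal hA.eigenvalues *ᵥ (Uᵀ *ᵥ v)
          = fun i => hA.eigenvalues i * (Uᵀ *ᵥ v) i from
        funext fun i => Matrix.mulVec_diagonal _ _ _]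
  have hdotU : ∀ v x : Fin k → ℝ, v ⬝ᵥ (U *ᵥ x) = (Uᵀ *ᵥ v) ⬝ᵥ x := by
    intro v x
    rw [Matrix.dotProduct_mulVec]
    congr 1
    rw [← Matrix.vecMul_transpose, Matrix.transpose_transpose]
  have hnorm : ∀ v : Fin k → ℝ, (Uᵀ *ᵥ v) ⬝ᵥ (Uᵀ *ᵥ v) = v ⬝ᵥ v := by
    intro v
    rw [← hdotU, Matrix.mulVec_mulVec, hUU, Matrix.one_mulVec]
  have hquad : ∀ v : Fin k → ℝ,
      μ * (v ⬝ᵥ v) - v ⬝ᵥ (A *ᵥ v)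
        = ∑ i, (μ - hA.eigenvalues i) * ((Uᵀ *ᵥ v) i)^2 := by
    intro v
    rw [hAv, hdotU, ← hnorm v]
    simp only [dotProduct]
    rw [Finset.mul_sum, ← Finset.sum_sub_distrib]
    congr 1; ext i; ring
  have hRay : ∀ v : Fin k → ℝ, v ⬝ᵥ (A *ᵥ v) ≤ μ * (v ⬝ᵥ v) := by
    intro v
    have h0 : 0 ≤ μ * (v ⬝ᵥ v) - v ⬝ᵥ (A *ᵥ v) := by
      rw [hquad]
      exact Finset.sum_nonneg fun i _ =>
        mul_nonneg (sub_nonneg.mpr (hi0' i)) (sq_nonneg _)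
    linarith
  have hEq : ∀ v : Fin k → ℝ, v ⬝ᵥ (A *ᵥ v) = μ * (v ⬝ᵥ v) → A *ᵥ v = μ • v := by
    intro v hv
    have h0 : ∑ i, (μ - hA.eigenvalues i) * ((Uᵀ *ᵥ v) i)^2 = 0 := by
      rw [← hquad, hv]; ring
    have hterm : ∀ i ∈ Finset.univ, (μ - hA.eigenvalues i) * ((Uᵀ *ᵥ v) i)^2 = 0 :=
      (Finset.sum_eq_zero_iff_of_nonneg fun i _ =>
        mul_nonneg (sub_nonneg.mpr (hi0' i)) (sq_nonneg _)).mp h0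
    have hptw : (fun i => hA.eigenvalues i * (Uᵀ *ᵥ v) i) = μ • (Uᵀ *ᵥ v) := by
      ext i
      have := hterm i (Finset.mem_univ i)
      rcases mul_eq_zero.mp this with h | h
      · have : hA.eigenvalues i = μ := by linarith [sub_eq_zero.mp h]
        simp [this]
      · have : (Uᵀ *ᵥ v) i = 0 := by
          have := sq_eq_zero_iff.mp h; exact this
        simp [this]
    rw [hAv, hptw, Matrix.mulVec_smul, Matrix.mulVec_mulVec, hUU, Matrix.one_mulVec]
  have hμmem : μ ∈ spectrum ℝ A := hA.eigenvalues_mem_spectrum_real i0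
  have hub : ∀ lam ∈ spectrum ℝ A, lam ≤ μ := by
    intro lam hlam
    obtain ⟨v, hv0, hvA⟩ := spec_eigvec hlam
    have h1 : v ⬝ᵥ (A *ᵥ v) = lam * (v ⬝ᵥ v) := by
      rw [hvA, dotProduct_smul, smul_eq_mul]
    have h2 := hRay v
    rw [h1] at h2
    exact le_of_mul_le_mul_right (by linarith) (dot_self_pos hv0)
  refine ⟨μ, le_antisymm (csSup_le ⟨μ, hμmem⟩ hub) (le_csSup ⟨μ, hub⟩ hμmem), hμmem, hRay, hEq⟩


lemma perron {η T : ℝ} (hη : 0 < η) {A : Matrix (Fin k) (Fin k) ℝ}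
    (hAlow : ∀ i j, η ≤ A i j) (hAhigh : ∀ i j, A i j ≤ T)
    {μ : ℝ} (hμmem : μ ∈ spectrum ℝ A)
    (hRay : ∀ v : Fin k → ℝ, v ⬝ᵥ (A *ᵥ v) ≤ μ * (v ⬝ᵥ v))
    (hEqc : ∀ v : Fin k → ℝ, v ⬝ᵥ (A *ᵥ v) = μ * (v ⬝ᵥ v) → A *ᵥ v = μ • v) :
    ∃ w : Fin k → ℝ, (∀ i, 0 ≤ w i) ∧ A *ᵥ w = μ • w ∧ 0 < ∑ j, w j ∧
      (∀ i, η * (∑ j, w j) ≤ μ * w i) ∧ (∀ i, μ * w i ≤ T * (∑ j, w j)) ∧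
      0 < μ ∧ μ ≤ (k : ℝ) * T := by
  obtain ⟨u, hu0, huA⟩ := spec_eigvec hμmem
  set w : Fin k → ℝ := fun i => |u i| with hwdef
  have hwnn : ∀ i, 0 ≤ w i := fun i => abs_nonneg _
  have hww : w ⬝ᵥ w = u ⬝ᵥ u := by
    simp [dotProduct, hwdef, abs_mul_abs_self]
  have hquadu : u ⬝ᵥ (A *ᵥ u) = μ * (u ⬝ᵥ u) := by
    rw [huA, dotProduct_smul, smul_eq_mul]
  have hqw : μ * (w ⬝ᵥ w) ≤ w ⬝ᵥ (A *ᵥ w) := by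
    rw [hww, ← hquadu, quad_expand, quad_expand]
    refine Finset.sum_le_sum fun i _ => Finset.sum_le_sum fun j _ => ?_
    calc u i * (A i j * u j) ≤ |u i * (A i j * u j)| := le_abs_self _
      _ = |u i| * (A i j * |u j|) := by
          rw [abs_mul, abs_mul, abs_of_nonneg (le_trans hη.le (hAlow i j))]
  have hwA : A *ᵥ w = μ • w := hEqc w (le_antisymm (hRay w) hqw)
  have hwne : w ≠ 0 := by
    intro h
    apply hu0
    ext i
    have := congrFun h i
    simpa [hwdef, abs_eq_zero] using this
  set W := ∑ j, w j with hWdef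
  have hWpos : 0 < W := by
    obtain ⟨i, hi⟩ := Function.ne_iff.mp hwne
    exact Finset.sum_pos' (fun j _ => hwnn j)
      ⟨i, Finset.mem_univ i, lt_of_le_of_ne (hwnn i) (Ne.symm hi)⟩
  have hwS : 0 < w ⬝ᵥ w := dot_self_pos hwne
  have hquadw : w ⬝ᵥ (A *ᵥ w) = μ * (w ⬝ᵥ w) := by
    rw [hwA, dotProduct_smul, smul_eq_mul]
  have hμpos : 0 < μ := by
    have h1 : η * (W * W) ≤ w ⬝ᵥ (A *ᵥ w) := by
      rw [quad_expand, hWdef, Finset.sum_mul_sum, Finset.mul_sum]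
      refine Finset.sum_le_sum fun i _ => ?_
      rw [Finset.mul_sum]
      refine Finset.sum_le_sum fun j _ => ?_
      nlinarith [mul_le_mul_of_nonneg_right (hAlow i j) (mul_nonneg (hwnn i) (hwnn j))]
    by_contra h
    push_neg at h
    have h2 : μ * (w ⬝ᵥ w) ≤ 0 := mul_nonpos_of_nonpos_of_nonneg h hwS.le
    nlinarith [mul_pos hη (mul_pos hWpos hWpos)]
  have hμw : ∀ i, (∑ j, A i j * w j) = μ * w i := by
    intro i
    have := congrFun hwA i
    simpa [Matrix.mulVec, dotProduct] using this
  have hlow : ∀ i, η * W ≤ μ * w i := by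
    intro i
    rw [← hμw i, hWdef, Finset.mul_sum]
    exact Finset.sum_le_sum fun j _ => mul_le_mul_of_nonneg_right (hAlow i j) (hwnn j)
  have hhigh : ∀ i, μ * w i ≤ T * W := by
    intro i
    rw [← hμw i, hWdef, Finset.mul_sum]
    exact Finset.sum_le_sum fun j _ => mul_le_mul_of_nonneg_right (hAhigh i j) (hwnn j)
  have hμkT : μ ≤ (k : ℝ) * T := by
    have h1 : ∑ i : Fin k, μ * w i ≤ ∑ i : Fin k, T * W :=
      Finset.sum_le_sum fun i _ => hhigh i
    rw [← Finset.mul_sum, ← hWdef, Finset.sum_const, Finset.card_univ, Fintype.card_fin,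
      nsmul_eq_mul] at h1
    have h2 : μ * W ≤ ((k : ℝ) * T) * W := by rw [mul_assoc]; exact h1
    exact le_of_mul_le_mul_right h2 hWpos
  exact ⟨w, hwnn, hwA, hWpos, hlow, hhigh, hμpos, hμkT⟩

lemma gap_neg {η T μ lam : ℝ} (hη : 0 < η) (hηT : η < T)
    {A : Matrix (Fin k) (Fin k) ℝ} (hAlow : ∀ i j, η ≤ A i j)
    (hRay : ∀ v : Fin k → ℝ, v ⬝ᵥ (A *ᵥ v) ≤ μ * (v ⬝ᵥ v))
    {v : Fin k → ℝ} (hv0 : v ≠ 0) (hvA : A *ᵥ v = lam • v)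
    (hnegc : lam ≤ 0) : -lam + η^2/T ≤ μ := by
  have hT : (0:ℝ) < T := hη.trans hηT
  set S := v ⬝ᵥ v with hSdef
  have hS : 0 < S := dot_self_pos hv0
  have hquadv : v ⬝ᵥ (A *ᵥ v) = lam * S := by
    rw [hvA, dotProduct_smul, smul_eq_mul]
  set z : Fin k → ℝ := fun i => |v i| with hzdef
  have hznn : ∀ i, 0 ≤ z i := fun i => abs_nonneg _
  have hzz : z ⬝ᵥ z = S := by
    simp [hSdef, dotProduct, hzdef, abs_mul_abs_self]
  have hSsz : S ≤ (∑ i, z i) * (∑ i, z i) := by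
    rw [Finset.sum_mul_sum, ← hzz]
    simp only [dotProduct]
    refine Finset.sum_le_sum fun i _ => ?_
    exact Finset.single_le_sum (f := fun j => z i * z j)
      (fun j _ => mul_nonneg (hznn i) (hznn j)) (Finset.mem_univ i)
  have habs : ∀ i j, z i * z j = |v i * v j| := by
    intro i j; rw [hzdef, abs_mul]
  have e1 : z ⬝ᵥ (A *ᵥ z) + v ⬝ᵥ (A *ᵥ v)
      = ∑ i, ∑ j, (z i * (A i j * z j) + v i * (A i j * v j)) := by
    rw [quad_expand, quad_expand, ← Finset.sum_add_distrib]
    exact Finset.sum_congr rfl fun i _ => (Finset.sum_add_distrib).symm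
  have e2 : η * ((∑ i, z i) * (∑ i, z i) + (∑ i, v i) * (∑ i, v i))
      = ∑ i, ∑ j, η * (z i * z j + v i * v j) := by
    rw [Finset.sum_mul_sum, Finset.sum_mul_sum, ← Finset.sum_add_distrib, Finset.mul_sum]
    refine Finset.sum_congr rfl fun i _ => ?_
    rw [← Finset.sum_add_distrib, Finset.mul_sum]
  have key : η * ((∑ i, z i) * (∑ i, z i) + (∑ i, v i) * (∑ i, v i))
      ≤ z ⬝ᵥ (A *ᵥ z) + v ⬝ᵥ (A *ᵥ v) := by
    rw [e1, e2]
    refine Finset.sum_le_sum fun i _ => Finset.sum_le_sum fun j _ => ?_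
    have h0 : 0 ≤ z i * z j + v i * v j := by
      rw [habs]
      linarith [neg_abs_le (v i * v j)]
    nlinarith [mul_le_mul_of_nonneg_right (hAlow i j) h0]
  have hzq : z ⬝ᵥ (A *ᵥ z) ≤ μ * S := by
    have := hRay z; rwa [hzz] at this
  have hμη : -lam + η ≤ μ := by
    have hsq : 0 ≤ (∑ i, v i) * (∑ i, v i) := mul_self_nonneg _
    have : η * S ≤ μ * S - lam * S := by nlinarith
    nlinarith
  have hdiv : η^2/T ≤ η := by
    rw [div_le_iff₀ hT]; nlinarith
  linarith

set_option maxHeartbeats 4000000 in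
lemma gap_pos {η T μ lam : ℝ} (hη : 0 < η) (hηT : η < T)
    {A : Matrix (Fin k) (Fin k) ℝ} (hAlow : ∀ i j, η ≤ A i j)
    (hRay : ∀ v : Fin k → ℝ, v ⬝ᵥ (A *ᵥ v) ≤ μ * (v ⬝ᵥ v))
    {v : Fin k → ℝ} (hv0 : v ≠ 0) (hvA : A *ᵥ v = lam • v)
    {w : Fin k → ℝ} (hwnn : ∀ i, 0 ≤ w i) (hWpos : 0 < ∑ j, w j)
    (hlow : ∀ i, η * (∑ j, w j) ≤ μ * w i) (hhigh : ∀ i, μ * w i ≤ T * (∑ j, w j))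
    (horth : w ⬝ᵥ v = 0) (hposc : 0 < lam) : lam + η^2/T ≤ μ := by
  have hT : (0:ℝ) < T := hη.trans hηT
  set W := ∑ j, w j with hWdef
  set S := v ⬝ᵥ v with hSdef
  have hS : 0 < S := dot_self_pos hv0
  have hquadv : v ⬝ᵥ (A *ᵥ v) = lam * S := by
    rw [hvA, dotProduct_smul, smul_eq_mul]
  set z : Fin k → ℝ := fun i => |v i| with hzdef
  have hznn : ∀ i, 0 ≤ z i := fun i => abs_nonneg _
  have hzz : z ⬝ᵥ z = S := by
    simp [hSdef, dotProduct, hzdef, abs_mul_abs_self]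
  set P := ∑ i, max (v i) 0 with hPdef
  set N := ∑ i, max (-(v i)) 0 with hNdef
  have hzi : ∀ i, z i = max (v i) 0 + max (-(v i)) 0 := by
    intro i
    rcases le_total (v i) 0 with h | h
    · simp [hzdef, abs_of_nonpos h, max_eq_right h, max_eq_left (neg_nonneg.mpr h)]
    · simp [hzdef, abs_of_nonneg h, max_eq_left h, max_eq_right (neg_nonpos.mpr h)]
  have hvi : ∀ i, v i = max (v i) 0 - max (-(v i)) 0 := by
    intro i
    rcases le_total (v i) 0 with h | h
    · simp [max_eq_right h, max_eq_left (neg_nonneg.mpr h)]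
    · simp [max_eq_left h, max_eq_right (neg_nonpos.mpr h)]
  have hsz : ∑ i, z i = P + N := by
    rw [hPdef, hNdef, ← Finset.sum_add_distrib]
    exact Finset.sum_congr rfl fun i _ => hzi i
  have hsv : ∑ i, v i = P - N := by
    rw [hPdef, hNdef, ← Finset.sum_sub_distrib]
    exact Finset.sum_congr rfl fun i _ => hvi i
  have hPnn : 0 ≤ P := Finset.sum_nonneg fun i _ => le_max_right _ _
  have hNnn : 0 ≤ N := Finset.sum_nonneg fun i _ => le_max_right _ _
  have hSsz : S ≤ (∑ i, z i) * (∑ i, z i) := by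
    rw [Finset.sum_mul_sum, ← hzz]
    simp only [dotProduct]
    refine Finset.sum_le_sum fun i _ => ?_
    exact Finset.single_le_sum (f := fun j => z i * z j)
      (fun j _ => mul_nonneg (hznn i) (hznn j)) (Finset.mem_univ i)
  have habs : ∀ i j, z i * z j = |v i * v j| := by
    intro i j; rw [hzdef, abs_mul]
  have e1 : z ⬝ᵥ (A *ᵥ z) - v ⬝ᵥ (A *ᵥ v)
      = ∑ i, ∑ j, (z i * (A i j * z j) - v i * (A i j * v j)) := by
    rw [quad_expand, quad_expand, ← Finset.sum_sub_distrib]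
    exact Finset.sum_congr rfl fun i _ => (Finset.sum_sub_distrib _ _).symm
  have e2 : η * ((∑ i, z i) * (∑ i, z i) - (∑ i, v i) * (∑ i, v i))
      = ∑ i, ∑ j, η * (z i * z j - v i * v j) := by
    rw [Finset.sum_mul_sum, Finset.sum_mul_sum, ← Finset.sum_sub_distrib, Finset.mul_sum]
    refine Finset.sum_congr rfl fun i _ => ?_
    rw [← Finset.sum_sub_distrib, Finset.mul_sum]
  have key : η * ((∑ i, z i) * (∑ i, z i) - (∑ i, v i) * (∑ i, v i))
      ≤ z ⬝ᵥ (A *ᵥ z) - v ⬝ᵥ (A *ᵥ v) := by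
    rw [e1, e2]
    refine Finset.sum_le_sum fun i _ => Finset.sum_le_sum fun j _ => ?_
    have h0 : 0 ≤ z i * z j - v i * v j := by
      rw [habs]
      linarith [le_abs_self (v i * v j)]
    nlinarith [mul_le_mul_of_nonneg_right (hAlow i j) h0]
  have hos : ∑ i, w i * max (v i) 0 = ∑ i, w i * max (-(v i)) 0 := by
    have h1 : ∑ i, w i * v i = 0 := horth
    have h2 : ∑ i, w i * v i
        = ∑ i, (w i * max (v i) 0 - w i * max (-(v i)) 0) := by
      refine Finset.sum_congr rfl fun i _ => ?_
      conv_lhs => rw [hvi i]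
      ring
    rw [h2, Finset.sum_sub_distrib] at h1
    linarith
  have ha1 : η * W * N ≤ μ * ∑ i, w i * max (-(v i)) 0 := by
    calc η * W * N = ∑ i, (η * W) * max (-(v i)) 0 := by
          rw [hNdef]; exact Finset.mul_sum _ _ _
      _ ≤ ∑ i, μ * (w i * max (-(v i)) 0) := Finset.sum_le_sum fun i _ => by
          nlinarith [mul_le_mul_of_nonneg_right (hlow i) (le_max_right (-(v i)) 0)]
      _ = μ * ∑ i, w i * max (-(v i)) 0 := (Finset.mul_sum _ _ _).symm
  have ha2 : μ * ∑ i, w i * max (v i) 0 ≤ T * W * P := by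
    calc μ * ∑ i, w i * max (v i) 0 = ∑ i, μ * (w i * max (v i) 0) :=
          Finset.mul_sum _ _ _
      _ ≤ ∑ i, (T * W) * max (v i) 0 := Finset.sum_le_sum fun i _ => by
          nlinarith [mul_le_mul_of_nonneg_right (hhigh i) (le_max_right (v i) 0)]
      _ = T * W * P := by rw [hPdef]; exact (Finset.mul_sum _ _ _).symm
  have ha1' : η * W * P ≤ μ * ∑ i, w i * max (v i) 0 := by
    calc η * W * P = ∑ i, (η * W) * max (v i) 0 := by
          rw [hPdef]; exact Finset.mul_sum _ _ _
      _ ≤ ∑ i, μ * (w i * max (v i) 0) := Finset.sum_le_sum fun i _ => by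
          nlinarith [mul_le_mul_of_nonneg_right (hlow i) (le_max_right (v i) 0)]
      _ = μ * ∑ i, w i * max (v i) 0 := (Finset.mul_sum _ _ _).symm
  have ha2' : μ * ∑ i, w i * max (-(v i)) 0 ≤ T * W * N := by
    calc μ * ∑ i, w i * max (-(v i)) 0 = ∑ i, μ * (w i * max (-(v i)) 0) :=
          Finset.mul_sum _ _ _
      _ ≤ ∑ i, (T * W) * max (-(v i)) 0 := Finset.sum_le_sum fun i _ => by
          nlinarith [mul_le_mul_of_nonneg_right (hhigh i) (le_max_right (-(v i)) 0)]
      _ = T * W * N := by rw [hNdef]; exact (Finset.mul_sum _ _ _).symm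
  have hNP : η * N ≤ T * P := by
    have h1 : η * W * N ≤ T * W * P := le_trans ha1 (le_trans (by rw [hos]) ha2)
    have h2 : (η * N) * W ≤ (T * P) * W := by nlinarith
    exact le_of_mul_le_mul_right h2 hWpos
  have hPN : η * P ≤ T * N := by
    have h1 : η * W * P ≤ T * W * N := le_trans ha1' (le_trans (by rw [hos]) ha2')
    have h2 : (η * P) * W ≤ (T * N) * W := by nlinarith
    exact le_of_mul_le_mul_right h2 hWpos
  have h4PN : η * S ≤ T * (4 * (P * N)) := by
    have hs1 : η * S ≤ η * ((P + N) * (P + N)) := by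
      have := hSsz; rw [hsz] at this
      exact mul_le_mul_of_nonneg_left this hη.le
    nlinarith [mul_nonneg hPnn (sub_nonneg.mpr hPN),
      mul_nonneg hNnn (sub_nonneg.mpr hNP),
      mul_nonneg (mul_nonneg hPnn hNnn) (sub_nonneg.mpr hηT.le)]
  have hzq : z ⬝ᵥ (A *ᵥ z) ≤ μ * S := by
    have := hRay z; rwa [hzz] at this
  have hdiff : (∑ i, z i) * (∑ i, z i) - (∑ i, v i) * (∑ i, v i) = 4 * (P * N) := by
    rw [hsz, hsv]; ring
  have hkey2 : lam * S + η * (4 * (P * N)) ≤ μ * S := by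
    rw [hdiff] at key
    nlinarith [key, hzq, hquadv]
  have h' : η^2 ≤ (μ - lam) * T := by
    have hTS : 0 < T * S := mul_pos hT hS
    nlinarith
  have := (div_le_iff₀ hT).mpr h'
  linarith [this]

end UniformSpectralGap

open UniformSpectralGap in
set_option maxHeartbeats 1000000 in
/-- Equation (7.2) (supLambda2): a uniform spectral gap for symmetric matrices with all
entries in [η,T]: every eigenvalue other than the largest is at most c·λ_max in modulus,
for some constant c < 1 depending only on η, T (and k). -/
theorem uniform_spectral_gap
    {k : ℕ} (hk : 0 < k) (η T : ℝ) (hη : 0 < η) (hηT : η < T) :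
    ∃ c : ℝ, c < 1 ∧
      ∀ A : Matrix (Fin k) (Fin k) ℝ, A.IsSymm → (∀ i j, A i j ∈ Set.Icc η T) →
        ∀ lam ∈ spectrum ℝ A, lam ≠ sSup (spectrum ℝ A) →
          |lam| ≤ c * sSup (spectrum ℝ A) := by
  have hT : (0:ℝ) < T := hη.trans hηT
  have hk' : (0:ℝ) < k := Nat.cast_pos.mpr hk
  refine ⟨1 - η^2/(k*T^2), sub_lt_self 1
    (div_pos (pow_pos hη 2) (mul_pos hk' (pow_pos hT 2))), ?_⟩
  intro A hsymm hmem lam hlam hne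
  have hA : A.IsHermitian := by
    rw [Matrix.IsHermitian, Matrix.conjTranspose_eq_transpose_of_trivial]; exact hsymm
  obtain ⟨μ, hμeq, hμmem, hRay, hEqc⟩ := sSup_spectrum_spec hk hA
  rw [hμeq] at hne ⊢
  have hAlow : ∀ i j, η ≤ A i j := fun i j => (hmem i j).1
  have hAhigh : ∀ i j, A i j ≤ T := fun i j => (hmem i j).2
  obtain ⟨w, hwnn, hwA, hWpos, hlow, hhigh, hμpos, hμkT⟩ :=
    perron hη hAlow hAhigh hμmem hRay hEqc
  obtain ⟨v, hv0, hvA⟩ := spec_eigvec hlam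
  have horth : w ⬝ᵥ v = 0 := by
    have h1 : w ⬝ᵥ (A *ᵥ v) = lam * (w ⬝ᵥ v) := by
      rw [hvA, dotProduct_smul, smul_eq_mul]
    have h2 : w ⬝ᵥ (A *ᵥ v) = μ * (w ⬝ᵥ v) := by
      rw [Matrix.dotProduct_mulVec]
      conv_lhs => rw [← hsymm, Matrix.vecMul_transpose]
      rw [hwA, smul_dotProduct, smul_eq_mul]
    have h3 : (lam - μ) * (w ⬝ᵥ v) = 0 := by linear_combination h1.symm.trans h2
    exact (mul_eq_zero.mp h3).resolve_left (sub_ne_zero.mpr hne)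
  have hgap : |lam| + η^2/T ≤ μ := by
    rcases le_or_gt lam 0 with hnegc | hposc
    · have := gap_neg hη hηT hAlow hRay hv0 hvA hnegc
      rw [abs_of_nonpos hnegc]
      linarith
    · have := gap_pos hη hηT hAlow hRay hv0 hvA hwnn hWpos hlow hhigh horth hposc
      rw [abs_of_pos hposc]
      linarith
  have hc : (η^2/((k:ℝ)*T^2)) * μ ≤ η^2/T := by
    have h1 : (η^2/((k:ℝ)*T^2)) * ((k:ℝ)*T) = η^2/T := by
      field_simp
    calc (η^2/((k:ℝ)*T^2)) * μ ≤ (η^2/((k:ℝ)*T^2)) * ((k:ℝ)*T) :=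
        mul_le_mul_of_nonneg_left hμkT (by positivity)
      _ = η^2/T := h1
  nlinarith [hgap, hc]
end
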